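/- arXiv:1611.04623 — 12 statements merged into one kernel-verified Lean document; each statement's English description precedes it below -/
import Mathlib

section
/- Let X be a normed linear space and Y a metric space. If there exists a map f : X → Y whose compression modulus ρ_f(t) = inf{d_Y(f(x₁),f(x₂)) : d_X(x₁,x₂) ≥ t} satisfies lim_{t→∞} ρ_f(t) = ∞, then the density character of X is at most the density character of Y. -/
open ENNReal NNReal Set Filter ZeroAtInfty

/-- `U` is a cover of the space. -/
def IsCover {X : Type*} (U : Set (Set X)) : Prop := ⋃₀ U = Set.univ

/-- `U` is point-finite: every point lies in only finitely many members. -/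
def PointFinite {X : Type*} (U : Set (Set X)) : Prop :=
  ∀ x : X, {V | V ∈ U ∧ x ∈ V}.Finite

/-- The Lebesgue number of a family of sets. -/
noncomputable def Leb {X : Type*} [PseudoMetricSpace X] (U : Set (Set X)) : ℝ≥0∞ :=
  sSup {d : ℝ≥0∞ | ∀ E : Set X, EMetric.diam E < d → ∃ V ∈ U, E ⊆ V}

/-- The diameter of a family of sets: the sup of the diameters of its members. -/
noncomputable def covDiam {X : Type*} [PseudoMetricSpace X] (U : Set (Set X)) : ℝ≥0∞ :=
  ⨆ V ∈ U, EMetric.diam V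

/-- The modulus `Δ_X^{(c)}`. -/
noncomputable def Δc (X : Type*) [PseudoMetricSpace X] (R : ℝ≥0∞) : ℝ≥0∞ :=
  ⨅ U ∈ {U : Set (Set X) | IsCover U ∧ PointFinite U ∧ R ≤ Leb U}, covDiam U

/-- The modulus `Δ_X^{(u)}`. -/
noncomputable def Δu (X : Type*) [PseudoMetricSpace X] (r : ℝ≥0∞) : ℝ≥0∞ :=
  ⨆ U ∈ {U : Set (Set X) | IsCover U ∧ PointFinite U ∧ covDiam U ≤ r}, Leb U

/-- The density character: the least cardinality of a dense subset. -/
noncomputable def densChar (X : Type*) [TopologicalSpace X] : Cardinal :=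
  sInf {c : Cardinal | ∃ s : Set X, Dense s ∧ Cardinal.mk s = c}

/-- The modulus of continuity (expansion) of a map. -/
noncomputable def omegaMod {X Y : Type*} [PseudoMetricSpace X] [PseudoMetricSpace Y]
    (f : X → Y) (t : ℝ) : ℝ≥0∞ :=
  ⨆ p ∈ {p : X × X | dist p.1 p.2 ≤ t}, edist (f p.1) (f p.2)

/-- The modulus of compression of a map. -/
noncomputable def rhoMod {X Y : Type*} [PseudoMetricSpace X] [PseudoMetricSpace Y]
    (f : X → Y) (t : ℝ) : ℝ≥0∞ :=
  ⨅ p ∈ {p : X × X | t ≤ dist p.1 p.2}, edist (f p.1) (f p.2)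

universe u v

theorem stmt0 {X : Type u} {Y : Type u} [NormedAddCommGroup X] [NormedSpace ℝ X] [MetricSpace Y]
    (f : X → Y) (hf : Tendsto (rhoMod f) atTop (nhds ⊤)) :
    densChar X ≤ densChar Y := by
  classical
  -- Step 1: find T with rhoMod f T > 1
  have h1 : ∀ᶠ t in atTop, (1 : ℝ≥0∞) < rhoMod f t :=
    hf.eventually (eventually_gt_nhds (by simp))
  obtain ⟨T0, hT0⟩ := h1.exists_forall_of_atTop
  set T : ℝ := max T0 1 with hTdef
  have hTpos : (0 : ℝ) < T := lt_of_lt_of_le one_pos (le_max_right _ _)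
  have hT1 : (1 : ℝ≥0∞) < rhoMod f T := hT0 T (le_max_left _ _)
  have key : ∀ x₁ x₂ : X, edist (f x₁) (f x₂) < 1 → dist x₁ x₂ < T := by
    intro x₁ x₂ h
    by_contra hc
    push_neg at hc
    have h2 : rhoMod f T ≤ edist (f x₁) (f x₂) :=
      iInf₂_le ((x₁, x₂) : X × X) hc
    exact absurd h (not_lt.2 (le_trans hT1.le h2))
  -- Step 2: dense set D realizing densChar Y
  have hne : {c : Cardinal | ∃ s : Set Y, Dense s ∧ Cardinal.mk s = c}.Nonempty :=
    ⟨Cardinal.mk (Set.univ : Set Y), Set.univ, dense_univ, rfl⟩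
  obtain ⟨D, hD, hDcard⟩ :
      ∃ s : Set Y, Dense s ∧ Cardinal.mk s = densChar Y := csInf_mem hne
  -- Step 3: choice function picking preimages of small balls
  have hsel : ∀ d : Y, ∃ z : X,
      (f ⁻¹' Metric.ball d (1/2)).Nonempty → f z ∈ Metric.ball d (1/2) := by
    intro d
    by_cases h : (f ⁻¹' Metric.ball d (1/2)).Nonempty
    · obtain ⟨z, hz⟩ := h; exact ⟨z, fun _ => hz⟩
    · exact ⟨0, fun h' => absurd h' h⟩
  choose g hg using hsel
  -- Step 4: g '' D is a T-net
  have net : ∀ x : X, ∃ d ∈ D, dist x (g d) < T := by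
    intro x
    obtain ⟨d, hd⟩ := Metric.dense_iff.1 hD (f x) (1/2) (by norm_num)
    have hx : f x ∈ Metric.ball d (1/2) := by
      rw [Metric.mem_ball, dist_comm]; exact hd.1
    have hgd : f (g d) ∈ Metric.ball d (1/2) := hg d ⟨x, hx⟩
    have hlt : dist (f x) (f (g d)) < 1 := by
      have ht := dist_triangle (f x) d (f (g d))
      have h1' : dist (f x) d < 1/2 := Metric.mem_ball.1 hx
      have h2' : dist d (f (g d)) < 1/2 := by
        rw [dist_comm]; exact Metric.mem_ball.1 hgd
      linarith
    have hed : edist (f x) (f (g d)) < 1 := by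
      have := edist_lt_ofReal.2 hlt
      simpa using this
    exact ⟨d, hd.2, key x (g d) hed⟩
  -- Step 5: scaled nets at every scale ε
  have netε : ∀ ε : ℝ, 0 < ε → ∀ x : X, ∃ d ∈ D, dist x ((ε / T) • g d) < ε := by
    intro ε hε x
    obtain ⟨d, hdD, hd⟩ := net ((ε / T)⁻¹ • x)
    refine ⟨d, hdD, ?_⟩
    have hc : (0 : ℝ) < ε / T := div_pos hε hTpos
    have heq : dist x ((ε / T) • g d) = (ε / T) * dist ((ε / T)⁻¹ • x) (g d) := by
      conv_lhs => rw [← smul_inv_smul₀ hc.ne' x]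
      rw [dist_smul₀, Real.norm_of_nonneg hc.le]
    rw [heq]
    calc (ε / T) * dist ((ε / T)⁻¹ • x) (g d) < (ε / T) * T :=
          mul_lt_mul_of_pos_left hd hc
      _ = ε := div_mul_cancel₀ ε hTpos.ne'
  -- Step 6: a dense set of cardinality ≤ ℵ₀ * #D
  set F : ULift.{u} ℕ × D → X :=
    fun p => ((1 / ((p.1.down : ℝ) + 1)) / T) • g (p.2 : Y) with hF
  set S : Set X := Set.range F with hS
  have hSdense : Dense S := by
    rw [Metric.dense_iff]
    intro x r hr
    obtain ⟨n, hn⟩ := exists_nat_one_div_lt hr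
    have hpos : (0 : ℝ) < 1 / ((n : ℝ) + 1) := by positivity
    obtain ⟨d, hdD, hd⟩ := netε (1 / ((n : ℝ) + 1)) hpos x
    refine ⟨(1 / ((n : ℝ) + 1) / T) • g d, ?_, ⟨(ULift.up n, ⟨d, hdD⟩), rfl⟩⟩
    rw [Metric.mem_ball, dist_comm]
    exact hd.trans hn
  have hScard : Cardinal.mk S ≤ Cardinal.aleph0 * Cardinal.mk D := by
    have h1 : Cardinal.mk S ≤ Cardinal.mk (ULift.{u} ℕ × D) := Cardinal.mk_range_le
    refine h1.trans ?_
    rw [Cardinal.mk_prod, Cardinal.mk_uLift, Cardinal.mk_nat]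
    simp
  have hX : densChar X ≤ Cardinal.mk S := csInf_le' ⟨S, hSdense, rfl⟩
  by_cases hκ : Cardinal.aleph0 ≤ Cardinal.mk D
  · calc densChar X ≤ Cardinal.aleph0 * Cardinal.mk D := hX.trans hScard
      _ = Cardinal.mk D := Cardinal.mul_eq_right hκ hκ Cardinal.aleph0_ne_zero
      _ = densChar Y := hDcard
  · -- degenerate case: D finite ⇒ X bounded ⇒ X = {0}
    push_neg at hκ
    have hDfin : D.Finite := Cardinal.lt_aleph0_iff_set_finite.1 hκ
    have hbd : Bornology.IsBounded (Set.univ : Set X) := by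
      have hsub : (Set.univ : Set X) ⊆ ⋃ d ∈ D, Metric.ball (g d) T := by
        intro x _
        obtain ⟨d, hdD, hd⟩ := net x
        exact Set.mem_biUnion hdD (Metric.mem_ball.2 hd)
      exact ((Bornology.isBounded_biUnion hDfin).2 fun d _ => Metric.isBounded_ball).subset hsub
    obtain ⟨r, hr⟩ := hbd.subset_closedBall 0
    have hzero : ∀ v : X, v = 0 := by
      intro v
      by_contra hv
      have hvpos : 0 < ‖v‖ := norm_pos_iff.2 hv
      have hr0 : 0 ≤ r := by
        have := hr (Set.mem_univ (0 : X))
        simpa using this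
      have h1 : ‖((r + 1) / ‖v‖) • v‖ ≤ r := by
        have := hr (Set.mem_univ (((r + 1) / ‖v‖) • v))
        simpa [dist_zero_right] using this
      have h2 : ‖((r + 1) / ‖v‖) • v‖ = r + 1 := by
        rw [norm_smul, Real.norm_of_nonneg (by positivity)]
        field_simp
      linarith [h1, h2 ▸ h1]
    have hdense0 : Dense ({0} : Set X) := by
      have : ({0} : Set X) = Set.univ := by
        ext x; simp [hzero x]
      rw [this]; exact dense_univ
    have hX1 : densChar X ≤ 1 :=
      csInf_le' ⟨{0}, hdense0, Cardinal.mk_singleton 0⟩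
    have hY1 : (1 : Cardinal) ≤ densChar Y := by
      rw [← hDcard]
      haveI : Nonempty Y := ⟨f 0⟩
      obtain ⟨d, hd⟩ := hD.nonempty
      exact Cardinal.one_le_iff_ne_zero.2 (Cardinal.mk_ne_zero_iff.2 ⟨⟨d, hd⟩⟩)
    exact hX1.trans hY1
end

section
/- A metric space X has the uniform Stone property (every cover with positive Lebesgue number admits a point-finite refinement with positive Lebesgue number) if and only if Δ_X^{(u)}(r) > 0 for all r > 0, where Δ_X^{(u)}(r) = sup{ℒ(𝒰) : 𝒰 is a point-finite cover of X with diam(𝒰) ≤ r}. -/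
open ENNReal NNReal Set Filter ZeroAtInfty

theorem stmt2 {X : Type*} [MetricSpace X] :
    (∀ U : Set (Set X), IsCover U → 0 < Leb U →
      ∃ V : Set (Set X), IsCover V ∧ PointFinite V ∧ 0 < Leb V ∧
        ∀ W ∈ V, ∃ W' ∈ U, W ⊆ W') ↔
    (∀ r : ℝ≥0, 0 < r → 0 < Δu X r) := by
  constructor
  · intro h r hr
    -- construct a cover by balls of radius r/2 plus the empty set
    set U₀ : Set (Set X) := insert ∅ {B | ∃ x : X, B = EMetric.ball x ((r : ℝ≥0∞) / 2)} with hU₀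
    have hr2 : (0 : ℝ≥0∞) < (r : ℝ≥0∞) / 2 :=
      ENNReal.div_pos (by exact_mod_cast hr.ne') (by norm_num)
    have hcov : IsCover U₀ := by
      apply Set.eq_univ_of_forall
      intro x
      exact ⟨EMetric.ball x ((r : ℝ≥0∞) / 2), Or.inr ⟨x, rfl⟩, EMetric.mem_ball_self hr2⟩
    have hleb : 0 < Leb U₀ := by
      refine lt_of_lt_of_le hr2 (le_sSup ?_)
      intro E hE
      rcases E.eq_empty_or_nonempty with rfl | ⟨x, hx⟩
      · exact ⟨∅, Or.inl rfl, Set.empty_subset _⟩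
      · refine ⟨EMetric.ball x ((r : ℝ≥0∞) / 2), Or.inr ⟨x, rfl⟩, ?_⟩
        intro y hy
        exact lt_of_le_of_lt (EMetric.edist_le_diam_of_mem hy hx) hE
    have hdiam : covDiam U₀ ≤ (r : ℝ≥0∞) := by
      refine iSup₂_le fun B hB => ?_
      rcases hB with rfl | ⟨x, rfl⟩
      · exact (le_of_eq EMetric.diam_empty).trans zero_le
      · calc EMetric.diam (EMetric.ball x ((r : ℝ≥0∞) / 2)) ≤ 2 * ((r : ℝ≥0∞) / 2) :=
              EMetric.diam_ball
          _ = r := ENNReal.mul_div_cancel' (by norm_num) (by norm_num)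
    obtain ⟨V, hVcov, hVpf, hVleb, hVref⟩ := h U₀ hcov hleb
    have hVdiam : covDiam V ≤ (r : ℝ≥0∞) := by
      refine iSup₂_le fun W hW => ?_
      obtain ⟨W', hW', hsub⟩ := hVref W hW
      calc EMetric.diam W ≤ EMetric.diam W' := EMetric.diam_mono hsub
        _ ≤ covDiam U₀ := le_iSup₂ (f := fun B (_ : B ∈ U₀) => EMetric.diam B) W' hW'
        _ ≤ r := hdiam
    have hle : Leb V ≤ Δu X r := by
      have hmem : V ∈ {U : Set (Set X) | IsCover U ∧ PointFinite U ∧ covDiam U ≤ (r : ℝ≥0∞)} :=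
        ⟨hVcov, hVpf, hVdiam⟩
      exact le_iSup₂ (f := fun U (_ : U ∈ {U : Set (Set X) | IsCover U ∧ PointFinite U ∧ covDiam U ≤ (r : ℝ≥0∞)}) => Leb U) V hmem
    exact lt_of_lt_of_le hVleb hle
  · intro h U hUcov hUleb
    rw [Leb] at hUleb
    obtain ⟨d, hd, hdpos⟩ := lt_sSup_iff.mp hUleb
    obtain ⟨r, hr0, hrd⟩ := ENNReal.lt_iff_exists_nnreal_btwn.mp hdpos
    have hrpos : 0 < r := by exact_mod_cast hr0
    have hΔ := h r hrpos
    rw [Δu] at hΔ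
    obtain ⟨V, hV⟩ := lt_iSup_iff.mp hΔ
    obtain ⟨⟨hVcov, hVpf, hVdiam⟩, hVleb⟩ := lt_iSup_iff.mp hV
    refine ⟨V, hVcov, hVpf, hVleb, fun W hW => ?_⟩
    apply hd
    calc EMetric.diam W ≤ covDiam V :=
          le_iSup₂ (f := fun B (_ : B ∈ V) => EMetric.diam B) W hW
      _ ≤ r := hVdiam
      _ < d := hrd
end

section
/- A metric space X has the coarse Stone property (every uniformly bounded cover refines a point-finite uniformly bounded cover) if and only if Δ_X^{(c)}(R) < ∞ for all R ∈ [0,∞), where Δ_X^{(c)}(R) = inf{diam(𝒰) : 𝒰 is a point-finite cover of X with ℒ(𝒰) ≥ R}. -/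
open ENNReal NNReal Set Filter ZeroAtInfty

theorem stmt3 {X : Type*} [MetricSpace X] :
    (∀ U : Set (Set X), IsCover U → covDiam U < ⊤ →
      ∃ V : Set (Set X), IsCover V ∧ PointFinite V ∧ covDiam V < ⊤ ∧
        ∀ W ∈ U, ∃ W' ∈ V, W ⊆ W') ↔
    (∀ R : ℝ≥0, Δc X R < ⊤) := by
  constructor
  · intro h R
    set U : Set (Set X) := insert ∅ (Set.range (fun x : X => Metric.ball x ((R : ℝ) + 1)))
      with hUdef
    have hcov : IsCover U := by
      rw [IsCover, Set.eq_univ_iff_forall]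
      intro x
      exact ⟨Metric.ball x ((R : ℝ) + 1), Or.inr ⟨x, rfl⟩,
        Metric.mem_ball_self (by positivity)⟩
    have hbd : covDiam U < ⊤ := by
      have : covDiam U ≤ ENNReal.ofReal ((R : ℝ) + 1) + ENNReal.ofReal ((R : ℝ) + 1) := by
        refine iSup₂_le fun V hV => ?_
        rcases hV with rfl | ⟨x, rfl⟩
        · exact EMetric.diam_empty.trans_le zero_le
        · refine EMetric.diam_le fun y hy z hz => ?_
          calc edist y z ≤ edist y x + edist x z := edist_triangle _ _ _
            _ ≤ ENNReal.ofReal ((R : ℝ) + 1) + ENNReal.ofReal ((R : ℝ) + 1) := by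
                gcongr
                · rw [edist_dist]; exact ENNReal.ofReal_le_ofReal hy.le
                · rw [edist_dist, dist_comm]; exact ENNReal.ofReal_le_ofReal hz.le
      exact lt_of_le_of_lt this (by finiteness)
    obtain ⟨V, hVcov, hVpf, hVbd, hVref⟩ := h U hcov hbd
    have hleb : (R : ℝ≥0∞) ≤ Leb V := by
      refine le_sSup ?_
      intro E hE
      rcases E.eq_empty_or_nonempty with rfl | ⟨x, hx⟩
      · obtain ⟨W', hW', _⟩ := hVref ∅ (Or.inl rfl)
        exact ⟨W', hW', Set.empty_subset _⟩
      · obtain ⟨W', hW', hsub⟩ := hVref (Metric.ball x ((R : ℝ) + 1)) (Or.inr ⟨x, rfl⟩)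
        refine ⟨W', hW', fun y hy => hsub ?_⟩
        have hyx : edist y x < (R : ℝ≥0∞) :=
          lt_of_le_of_lt (EMetric.edist_le_diam_of_mem hy hx) hE
        rw [← ENNReal.ofReal_coe_nnreal, edist_lt_ofReal] at hyx
        exact Metric.mem_ball.mpr (hyx.trans (by linarith))
    have : Δc X R ≤ covDiam V := by
      refine iInf₂_le V ?_
      exact ⟨hVcov, hVpf, hleb⟩
    exact lt_of_le_of_lt this hVbd
  · intro h U hUcov hUbd
    obtain ⟨R, hR1, -⟩ := ENNReal.lt_iff_exists_nnreal_btwn.mp hUbd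
    have hR := h R
    rw [Δc] at hR
    simp only [iInf_lt_iff, Set.mem_setOf_eq] at hR
    obtain ⟨V, ⟨hVcov, hVpf, hVleb⟩, hVbd⟩ := hR
    refine ⟨V, hVcov, hVpf, hVbd, fun W hW => ?_⟩
    have hdW : EMetric.diam W < Leb V :=
      lt_of_lt_of_le (lt_of_le_of_lt (le_biSup _ hW) hR1) hVleb
    rw [Leb, lt_sSup_iff] at hdW
    obtain ⟨d, hd, hWd⟩ := hdW
    exact hd W hWd
end

section
/- A metric space X has the uniform Stone property (Δ_X^{(u)}(r) > 0 for all r > 0) if and only if lim_{R→0} Δ_X^{(c)}(R) = 0. -/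
open ENNReal NNReal Set Filter ZeroAtInfty

theorem stmt6 {X : Type*} [MetricSpace X] :
    (∀ r : ℝ≥0, 0 < r → 0 < Δu X r) ↔
    Tendsto (Δc X) (nhdsWithin 0 (Set.Ioi 0)) (nhds 0) := by
  constructor
  · intro h
    rw [ENNReal.tendsto_nhds_zero]
    intro ε hε
    obtain ⟨r, hr0, hrε⟩ := ENNReal.lt_iff_exists_nnreal_btwn.mp hε
    have hr0' : 0 < r := by exact_mod_cast hr0
    have hu := h r hr0'
    rw [Δu, lt_iSup_iff] at hu
    obtain ⟨U, hU⟩ := hu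
    rw [lt_iSup_iff] at hU
    obtain ⟨hUmem, hLeb⟩ := hU
    have hmem : Set.Iio (Leb U) ∈ nhdsWithin (0:ℝ≥0∞) (Set.Ioi 0) :=
      nhdsWithin_le_nhds (Iio_mem_nhds hLeb)
    filter_upwards [hmem] with R hR
    have h1 : Δc X R ≤ covDiam U := by
      apply iInf₂_le U
      exact ⟨hUmem.1, hUmem.2.1, le_of_lt hR⟩
    exact h1.trans (hUmem.2.2.trans hrε.le)
  · intro h r hr
    have hrpos : (0:ℝ≥0∞) < r := by exact_mod_cast hr
    haveI : (nhdsWithin (0:ℝ≥0∞) (Set.Ioi 0)).NeBot :=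
      nhdsGT_neBot_of_exists_gt ⟨∞, ENNReal.coe_lt_top⟩
    have hev : ∀ᶠ R in nhdsWithin (0:ℝ≥0∞) (Set.Ioi 0), Δc X R < r :=
      h.eventually_lt_const hrpos
    obtain ⟨R, hR1, hR2⟩ := (hev.and self_mem_nhdsWithin).exists
    rw [Δc, iInf_lt_iff] at hR1
    obtain ⟨U, hU⟩ := hR1
    rw [iInf_lt_iff] at hU
    obtain ⟨hUmem, hcd⟩ := hU
    have h1 : Leb U ≤ Δu X r := by
      apply le_iSup₂ (f := fun U _ => Leb U) U
      exact ⟨hUmem.1, hUmem.2.1, hcd.le⟩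
    exact lt_of_lt_of_le (lt_of_lt_of_le hR2 hUmem.2.2) h1
end

section
/- A metric space X has the coarse Stone property (Δ_X^{(c)}(R) < ∞ for all R) if and only if lim_{r→∞} Δ_X^{(u)}(r) = ∞. -/
open ENNReal NNReal Set Filter ZeroAtInfty

theorem stmt7 {X : Type*} [MetricSpace X] :
    (∀ R : ℝ≥0, Δc X R < ⊤) ↔
    Tendsto (fun r : ℝ≥0 => Δu X r) atTop (nhds ⊤) := by
  constructor
  · intro h
    rw [ENNReal.tendsto_nhds_top_iff_nnreal]
    intro R
    have hR := h (R + 1)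
    simp only [Δc, iInf_lt_iff] at hR
    obtain ⟨U, hU, hdiam⟩ := hR
    obtain ⟨hcov, hpf, hleb⟩ := hU
    filter_upwards [eventually_ge_atTop (covDiam U).toNNReal] with r hr
    have hdle : covDiam U ≤ (r : ℝ≥0∞) := by
      rw [← ENNReal.coe_toNNReal hdiam.ne]
      exact ENNReal.coe_le_coe.mpr hr
    have hmem : U ∈ {U : Set (Set X) | IsCover U ∧ PointFinite U ∧ covDiam U ≤ (r : ℝ≥0∞)} :=
      ⟨hcov, hpf, hdle⟩
    calc (R : ℝ≥0∞) < ↑(R + 1) := by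
          rw [ENNReal.coe_lt_coe]; exact lt_add_one R
      _ ≤ Leb U := hleb
      _ ≤ Δu X r := le_iSup₂ (f := fun U _ => Leb U) U hmem
  · intro h R
    have : ∀ᶠ r : ℝ≥0 in atTop, (R : ℝ≥0∞) < Δu X r :=
      h.eventually (lt_mem_nhds ENNReal.coe_lt_top)
    obtain ⟨r, hr⟩ := this.exists
    simp only [Δu, lt_iSup_iff] at hr
    obtain ⟨U, hU, hlt⟩ := hr
    obtain ⟨hcov, hpf, hdiam⟩ := hU
    have : Δc X R ≤ covDiam U :=
      iInf₂_le (f := fun U _ => covDiam U) U ⟨hcov, hpf, hlt.le⟩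
    exact lt_of_le_of_lt this (lt_of_le_of_lt hdiam ENNReal.coe_lt_top)
end

section
/- Let X be a metric space. If there exist C < 1 and D ∈ [0,∞) such that Δ_X^{(c)}(R) ≤ CR + D for all R ∈ [0,∞), then diam(X) ≤ D/(1−C). -/
open ENNReal NNReal Set Filter ZeroAtInfty

theorem stmt8 {X : Type*} [MetricSpace X] (C D : ℝ≥0) (hC : C < 1)
    (h : ∀ R : ℝ≥0, Δc X R ≤ ((C * R + D : ℝ≥0) : ℝ≥0∞)) :
    EMetric.diam (Set.univ : Set X) ≤ ((D / (1 - C) : ℝ≥0) : ℝ≥0∞) := by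
  refine EMetric.diam_le fun x _ y _ => ?_
  have hfin : edist x y ≠ ⊤ := edist_ne_top x y
  set t := (edist x y).toNNReal with htdef
  have hcoe : (t : ℝ≥0∞) = edist x y := ENNReal.coe_toNNReal hfin
  have key : ∀ ε : ℝ≥0, 0 < ε →
      edist x y ≤ ((C * (t + ε) + D + ε : ℝ≥0) : ℝ≥0∞) := by
    intro ε hε
    set R : ℝ≥0 := t + ε with hR
    have hlt : Δc X R < ((C * R + D + ε : ℝ≥0) : ℝ≥0∞) := by
      refine lt_of_le_of_lt (h R) ?_
      exact_mod_cast lt_add_of_pos_right (C * R + D) hε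
    have hex : ∃ U ∈ {U : Set (Set X) | IsCover U ∧ PointFinite U ∧ (R : ℝ≥0∞) ≤ Leb U},
        covDiam U < ((C * R + D + ε : ℝ≥0) : ℝ≥0∞) := by
      simpa [Δc, iInf_lt_iff] using hlt
    obtain ⟨U, ⟨hcov, hpf, hleb⟩, hUd⟩ := hex
    have hxy : EMetric.diam ({x, y} : Set X) < Leb U := by
      rw [show EMetric.diam ({x, y} : Set X) = edist x y from EMetric.diam_pair, ← hcoe]
      refine lt_of_lt_of_le ?_ hleb
      exact_mod_cast lt_add_of_pos_right t hε
    have hLeb : Leb U = sSup {d : ℝ≥0∞ | ∀ E : Set X, EMetric.diam E < d → ∃ V ∈ U, E ⊆ V} := rfl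
    rw [hLeb] at hxy
    obtain ⟨d, hd, hltd⟩ := lt_sSup_iff.mp hxy
    obtain ⟨V, hVU, hsub⟩ := hd _ hltd
    have h1 : edist x y ≤ EMetric.diam V :=
      EMetric.edist_le_diam_of_mem (hsub (by simp)) (hsub (by simp))
    have h2 : EMetric.diam V ≤ covDiam U := by
      exact le_iSup₂ (f := fun (V : Set X) (_ : V ∈ U) => EMetric.diam V) V hVU
    exact le_trans (h1.trans h2) hUd.le
  have hC1 : (0 : ℝ) < 1 - (C : ℝ) := by
    have : (C : ℝ) < 1 := hC
    linarith
  have hreal : (t : ℝ) ≤ (C : ℝ) * t + D := by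
    refine le_of_forall_pos_le_add fun ε hε => ?_
    set δ : ℝ≥0 := ε.toNNReal / (C + 1) with hδdef
    have hCpos : (0 : ℝ≥0) < C + 1 := by positivity
    have hδ : 0 < δ := by
      apply div_pos _ hCpos
      simpa using hε
    have hk := key δ hδ
    rw [← hcoe] at hk
    have hk' : t ≤ C * (t + δ) + D + δ := by exact_mod_cast hk
    have hk'' : (t : ℝ) ≤ (C : ℝ) * (t + δ) + D + δ := by exact_mod_cast hk'
    have hδε : ((C : ℝ) + 1) * δ = ε := by
      have : ((δ : ℝ≥0) : ℝ) = ε / ((C : ℝ) + 1) := by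
        rw [hδdef]
        push_cast
        rw [Real.coe_toNNReal _ hε.le]
      rw [this]
      field_simp
    nlinarith [δ.coe_nonneg, C.coe_nonneg]
  have ht : (t : ℝ) ≤ (D : ℝ) / (1 - (C : ℝ)) := by
    rw [le_div_iff₀ hC1]
    nlinarith
  have htn : t ≤ (D / (1 - C) : ℝ≥0) := by
    rw [← NNReal.coe_le_coe]
    push_cast [NNReal.coe_sub hC.le]
    exact ht
  rw [← hcoe]
  exact_mod_cast htn
end

section
/- For a normed linear space X, the coarse Stone property and the uniform Stone property are equivalent; moreover each is equivalent to the existence of C ∈ [0,∞) with Δ_X^{(c)}(R) ≤ CR for all R, and to Δ_X^{(c)}(R) < ∞ for some R ∈ (0,∞). -/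
open ENNReal NNReal Set Filter ZeroAtInfty

section Aux

variable {X : Type*} [NormedAddCommGroup X] [NormedSpace ℝ X]

lemma nnnorm_coe_nnreal (c : ℝ≥0) : ‖(c : ℝ)‖₊ = c := by
  ext; simp [Real.nnnorm_of_nonneg c.coe_nonneg]

lemma diam_smul_image_le (c : ℝ) (E : Set X) :
    EMetric.diam ((c • ·) '' E) ≤ (‖c‖₊ : ℝ≥0∞) * EMetric.diam E := by
  apply EMetric.diam_le
  rintro _ ⟨x, hx, rfl⟩ _ ⟨y, hy, rfl⟩
  rw [edist_smul₀, ENNReal.smul_def, smul_eq_mul]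
  exact mul_le_mul_right (EMetric.edist_le_diam_of_mem hx hy) _

/-- scaled cover -/
def scaleCov (c : ℝ) (U : Set (Set X)) : Set (Set X) := (fun V => (c • ·) '' V) '' U

lemma scaleCov_isCover {c : ℝ} (hc : c ≠ 0) {U : Set (Set X)} (h : IsCover U) :
    IsCover (scaleCov c U) := by
  unfold IsCover scaleCov at *
  rw [Set.sUnion_image]
  ext x
  simp only [Set.mem_iUnion, Set.mem_univ, iff_true]
  have : c⁻¹ • x ∈ ⋃₀ U := h ▸ Set.mem_univ _
  obtain ⟨V, hV, hx⟩ := this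
  exact ⟨V, hV, ⟨c⁻¹ • x, hx, by simp [smul_smul, mul_inv_cancel₀ hc]⟩⟩

lemma scaleCov_pointFinite {c : ℝ} (hc : c ≠ 0) {U : Set (Set X)} (h : PointFinite U) :
    PointFinite (scaleCov c U) := by
  intro x
  refine ((h (c⁻¹ • x)).image (fun V => (c • ·) '' V)).subset ?_
  rintro W ⟨⟨V, hV, rfl⟩, hx⟩
  refine ⟨V, ⟨hV, ?_⟩, rfl⟩
  obtain ⟨v, hv, rfl⟩ := hx
  simpa [smul_smul, inv_mul_cancel₀ hc] using hv

lemma scaleCov_covDiam (c : ℝ) (U : Set (Set X)) :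
    covDiam (scaleCov c U) ≤ (‖c‖₊ : ℝ≥0∞) * covDiam U := by
  refine iSup₂_le ?_
  rintro _ ⟨V, hV, rfl⟩
  exact (diam_smul_image_le c V).trans
    (mul_le_mul_right (le_iSup₂ (f := fun V (_ : V ∈ U) => EMetric.diam V) V hV) _)

lemma scaleCov_leb (c : ℝ≥0) (hc : c ≠ 0) (U : Set (Set X)) :
    (c : ℝ≥0∞) * Leb U ≤ Leb (scaleCov (c : ℝ) U) := by
  unfold Leb
  rw [ENNReal.mul_sSup]
  refine iSup₂_le fun d hd => ?_
  refine le_sSup ?_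
  intro E hE
  have hE' : EMetric.diam (((c : ℝ)⁻¹ • ·) '' E) < d := by
    have h1 : EMetric.diam (((c : ℝ)⁻¹ • ·) '' E) ≤ (c⁻¹ : ℝ≥0∞) * EMetric.diam E := by
      have := diam_smul_image_le ((c : ℝ)⁻¹) E
      have heq : (‖((c : ℝ))⁻¹‖₊ : ℝ≥0∞) = (c⁻¹ : ℝ≥0∞) := by
        rw [nnnorm_inv, nnnorm_coe_nnreal, ENNReal.coe_inv hc]
      rwa [heq] at this
    have h2 : (c⁻¹ : ℝ≥0∞) * EMetric.diam E < (c⁻¹ : ℝ≥0∞) * ((c : ℝ≥0∞) * d) := by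
      rw [ENNReal.mul_lt_mul_iff_right (by simp) (by simp [hc])]
      exact hE
    have h3 : (c⁻¹ : ℝ≥0∞) * ((c : ℝ≥0∞) * d) = d := by
      rw [← mul_assoc, ENNReal.inv_mul_cancel (by simpa using hc) ENNReal.coe_ne_top, one_mul]
    exact lt_of_le_of_lt h1 (h3 ▸ h2)
  obtain ⟨V, hV, hsub⟩ := hd _ hE'
  refine ⟨(((c : ℝ)) • ·) '' V, ⟨V, hV, rfl⟩, fun x hx => ?_⟩
  refine ⟨(c : ℝ)⁻¹ • x, hsub ⟨x, hx, rfl⟩, ?_⟩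
  have hcc : (c : ℝ) ≠ 0 := by exact_mod_cast hc
  simp [smul_smul, mul_inv_cancel₀ hcc]

lemma Δc_zero : Δc X 0 = 0 := by
  refine le_antisymm ?_ zero_le
  have hle : Δc X 0 ≤ covDiam (Set.range fun x : X => ({x} : Set X)) := by
    refine iInf₂_le _ ⟨?_, ?_, zero_le⟩
    · ext x
      simp only [Set.mem_sUnion, Set.mem_univ, iff_true, Set.mem_range]
      exact ⟨{x}, ⟨x, rfl⟩, rfl⟩
    · intro x
      refine (Set.finite_singleton ({x} : Set X)).subset ?_
      rintro V ⟨⟨y, rfl⟩, hy⟩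
      simp only [Set.mem_singleton_iff] at hy
      simp [hy]
  refine le_trans hle ?_
  refine iSup₂_le ?_
  rintro _ ⟨y, rfl⟩
  exact EMetric.diam_singleton.le

/-- Key property P -/
def GoodCover (X : Type*) [PseudoMetricSpace X] : Prop :=
  ∃ U : Set (Set X), IsCover U ∧ PointFinite U ∧ 0 < Leb U ∧ covDiam U < ⊤

lemma exists_L {U : Set (Set X)} (h : 0 < Leb U) :
    ∃ L : ℝ≥0, 0 < L ∧ (L : ℝ≥0∞) ≤ Leb U := by
  rcases eq_or_ne (Leb U) ⊤ with hT | hT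
  · exact ⟨1, one_pos, by simp [hT]⟩
  · exact ⟨(Leb U).toNNReal, ENNReal.toNNReal_pos h.ne' hT,
      (ENNReal.coe_toNNReal hT).le⟩

lemma goodCover_to_c (h : GoodCover X) : ∀ R : ℝ≥0, Δc X R < ⊤ := by
  obtain ⟨U, hU1, hU2, hL, hD⟩ := h
  obtain ⟨L, hL0, hLle⟩ := exists_L hL
  intro R
  set c : ℝ≥0 := R / L + 1 with hcdef
  have hc : c ≠ 0 := by positivity
  have hadm : scaleCov (c : ℝ) U ∈
      {U : Set (Set X) | IsCover U ∧ PointFinite U ∧ (R : ℝ≥0∞) ≤ Leb U} := by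
    refine ⟨scaleCov_isCover (by exact_mod_cast hc) hU1,
      scaleCov_pointFinite (by exact_mod_cast hc) hU2, ?_⟩
    have h1 : (R : ℝ≥0∞) ≤ (c : ℝ≥0∞) * L := by
      rw [← ENNReal.coe_mul]
      apply ENNReal.coe_le_coe.2
      calc R = R / L * L := by rw [div_mul_cancel₀ _ hL0.ne']
        _ ≤ c * L := by
            apply mul_le_mul_left
            simp [hcdef]
    exact h1.trans ((mul_le_mul_right hLle _).trans (scaleCov_leb c hc U))
  calc Δc X R ≤ covDiam (scaleCov (c : ℝ) U) := iInf₂_le _ hadm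
    _ ≤ (‖(c : ℝ)‖₊ : ℝ≥0∞) * covDiam U := scaleCov_covDiam _ _
    _ < ⊤ := by
        rw [nnnorm_coe_nnreal]
        exact ENNReal.mul_lt_top ENNReal.coe_lt_top hD

lemma c_to_goodCover (h : ∃ R : ℝ≥0, 0 < R ∧ Δc X R < ⊤) : GoodCover X := by
  obtain ⟨R, hR, hlt⟩ := h
  rw [Δc, iInf_lt_iff] at hlt
  obtain ⟨U, hU⟩ := hlt
  rw [iInf_lt_iff] at hU
  obtain ⟨⟨h1, h2, h3⟩, h4⟩ := hU
  exact ⟨U, h1, h2, lt_of_lt_of_le (by exact_mod_cast hR) h3, h4⟩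

lemma goodCover_to_u (h : GoodCover X) : ∀ r : ℝ≥0, 0 < r → 0 < Δu X r := by
  obtain ⟨U, hU1, hU2, hL, hD⟩ := h
  intro r hr
  set D : ℝ≥0 := (covDiam U).toNNReal + 1 with hDdef
  have hDle : covDiam U ≤ (D : ℝ≥0∞) := by
    rw [hDdef]
    push_cast
    exact le_add_right (ENNReal.coe_toNNReal hD.ne).ge
  have hD0 : D ≠ 0 := by positivity
  set c : ℝ≥0 := r / D with hcdef
  have hc : c ≠ 0 := div_ne_zero hr.ne' hD0
  have hmem : scaleCov (c : ℝ) U ∈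
      {U : Set (Set X) | IsCover U ∧ PointFinite U ∧ covDiam U ≤ (r : ℝ≥0∞)} := by
    refine ⟨scaleCov_isCover (by exact_mod_cast hc) hU1,
      scaleCov_pointFinite (by exact_mod_cast hc) hU2, ?_⟩
    calc covDiam (scaleCov (c : ℝ) U) ≤ (‖(c : ℝ)‖₊ : ℝ≥0∞) * covDiam U := scaleCov_covDiam _ _
      _ ≤ (c : ℝ≥0∞) * (D : ℝ≥0∞) := by
          rw [nnnorm_coe_nnreal]; exact mul_le_mul_right hDle _
      _ = ((c * D : ℝ≥0) : ℝ≥0∞) := by rw [ENNReal.coe_mul]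
      _ ≤ (r : ℝ≥0∞) := by
          apply ENNReal.coe_le_coe.2
          rw [hcdef, div_mul_cancel₀ _ hD0]
  have : Leb (scaleCov (c : ℝ) U) ≤ Δu X r :=
    le_iSup₂ (f := fun (W : Set (Set X))
      (_ : W ∈ {U : Set (Set X) | IsCover U ∧ PointFinite U ∧ covDiam U ≤ (r : ℝ≥0∞)}) => Leb W)
      _ hmem
  refine lt_of_lt_of_le ?_ this
  refine lt_of_lt_of_le ?_ (scaleCov_leb c hc U)
  exact ENNReal.mul_pos (by exact_mod_cast hc) hL.ne'

lemma u_to_goodCover (h : ∀ r : ℝ≥0, 0 < r → 0 < Δu X r) : GoodCover X := by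
  have h1 := h 1 one_pos
  rw [Δu, lt_iSup_iff] at h1
  obtain ⟨U, hU⟩ := h1
  rw [lt_iSup_iff] at hU
  obtain ⟨⟨hc1, hc2, hc3⟩, hc4⟩ := hU
  exact ⟨U, hc1, hc2, hc4, lt_of_le_of_lt hc3 (by simp)⟩

lemma goodCover_to_linear (h : GoodCover X) :
    ∃ C : ℝ≥0, ∀ R : ℝ≥0, Δc X R ≤ ((C * R : ℝ≥0) : ℝ≥0∞) := by
  obtain ⟨U, hU1, hU2, hL, hD⟩ := h
  obtain ⟨L, hL0, hLle⟩ := exists_L hL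
  set D : ℝ≥0 := (covDiam U).toNNReal + 1 with hDdef
  have hDle : covDiam U ≤ (D : ℝ≥0∞) := by
    rw [hDdef]; push_cast
    exact le_add_right (ENNReal.coe_toNNReal hD.ne).ge
  refine ⟨D / L, fun R => ?_⟩
  rcases eq_or_ne R 0 with rfl | hR
  · simp [Δc_zero]
  set c : ℝ≥0 := R / L with hcdef
  have hc : c ≠ 0 := div_ne_zero hR hL0.ne'
  have hadm : scaleCov (c : ℝ) U ∈
      {U : Set (Set X) | IsCover U ∧ PointFinite U ∧ (R : ℝ≥0∞) ≤ Leb U} := by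
    refine ⟨scaleCov_isCover (by exact_mod_cast hc) hU1,
      scaleCov_pointFinite (by exact_mod_cast hc) hU2, ?_⟩
    have h1 : (R : ℝ≥0∞) ≤ (c : ℝ≥0∞) * L := by
      rw [← ENNReal.coe_mul]
      apply ENNReal.coe_le_coe.2
      rw [hcdef, div_mul_cancel₀ _ hL0.ne']
    exact h1.trans ((mul_le_mul_right hLle _).trans (scaleCov_leb c hc U))
  calc Δc X R ≤ covDiam (scaleCov (c : ℝ) U) := iInf₂_le _ hadm
    _ ≤ (‖(c : ℝ)‖₊ : ℝ≥0∞) * covDiam U := scaleCov_covDiam _ _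
    _ ≤ (c : ℝ≥0∞) * (D : ℝ≥0∞) := by
        rw [nnnorm_coe_nnreal]; exact mul_le_mul_right hDle _
    _ = ((D / L * R : ℝ≥0) : ℝ≥0∞) := by
        rw [← ENNReal.coe_mul]
        congr 1
        rw [hcdef]
        field_simp

end Aux


theorem stmt11 {X : Type*} [NormedAddCommGroup X] [NormedSpace ℝ X] :
    ((∀ R : ℝ≥0, Δc X R < ⊤) ↔ (∀ r : ℝ≥0, 0 < r → 0 < Δu X r)) ∧
    ((∀ R : ℝ≥0, Δc X R < ⊤) ↔
      ∃ C : ℝ≥0, ∀ R : ℝ≥0, Δc X R ≤ ((C * R : ℝ≥0) : ℝ≥0∞)) ∧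
    ((∀ R : ℝ≥0, Δc X R < ⊤) ↔ ∃ R : ℝ≥0, 0 < R ∧ Δc X R < ⊤) := by
  refine ⟨⟨fun h => goodCover_to_u (c_to_goodCover ⟨1, one_pos, h 1⟩),
    fun h => goodCover_to_c (u_to_goodCover h)⟩,
    ⟨fun h => goodCover_to_linear (c_to_goodCover ⟨1, one_pos, h 1⟩),
    fun ⟨C, hC⟩ R => lt_of_le_of_lt (hC R) ENNReal.coe_lt_top⟩,
    ⟨fun h => ⟨1, one_pos, h 1⟩, fun h => goodCover_to_c (c_to_goodCover h)⟩⟩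
end

section
/- Let X and Y be metric spaces where Y has the uniform Stone property. If there exists a uniform embedding f : X → Y, then X has the uniform Stone property. -/
open ENNReal NNReal Set Filter ZeroAtInfty

theorem stmt12 {X Y : Type*} [MetricSpace X] [MetricSpace Y]
    (hY : ∀ r : ℝ≥0, 0 < r → 0 < Δu Y r) (f : X → Y)
    (homega : Tendsto (omegaMod f) (nhdsWithin (0 : ℝ) (Set.Ioi 0)) (nhds 0))
    (hrho : ∀ t : ℝ, 0 < t → 0 < rhoMod f t) :
    ∀ r : ℝ≥0, 0 < r → 0 < Δu X r := by
  intro r hr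
  have hrR : (0:ℝ) < (r:ℝ) := by exact_mod_cast hr
  have hrho' : 0 < rhoMod f (r : ℝ) := hrho r hrR
  obtain ⟨c, hc0, hcrho⟩ := exists_between hrho'
  have hcne : c ≠ ∞ := (hcrho.trans_le le_top).ne
  set r' : ℝ≥0 := c.toNNReal with hr'def
  have hr'pos : 0 < r' := ENNReal.toNNReal_pos hc0.ne' hcne
  have hr'c : (r' : ℝ≥0∞) = c := ENNReal.coe_toNNReal hcne
  have hDelta := hY r' hr'pos
  obtain ⟨V, ⟨hVcov, hVpf, hVdiam⟩, hVleb⟩ :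
      ∃ V, (IsCover V ∧ PointFinite V ∧ covDiam V ≤ ((r' : ℝ≥0) : ℝ≥0∞)) ∧ 0 < Leb V := by
    by_contra h
    push_neg at h
    have hle : Δu Y r' ≤ 0 := by
      simp only [Δu, Set.mem_setOf_eq]
      exact iSup₂_le fun V hV => h V hV
    exact absurd hDelta (not_lt.2 hle)
  obtain ⟨d, hd, hdpos⟩ :
      ∃ d : ℝ≥0∞, (∀ E : Set Y, EMetric.diam E < d → ∃ W ∈ V, E ⊆ W) ∧ 0 < d := by
    by_contra h
    push_neg at h
    have hle : Leb V ≤ 0 := sSup_le fun d hd => h d hd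
    exact absurd hVleb (not_lt.2 hle)
  obtain ⟨t, htw, ht0⟩ : ∃ t : ℝ, omegaMod f t ∈ Set.Iio d ∧ t ∈ Set.Ioi (0:ℝ) :=
    ((homega.eventually (isOpen_Iio.mem_nhds hdpos)).and eventually_mem_nhdsWithin).exists
  rw [Set.mem_Iio] at htw
  rw [Set.mem_Ioi] at ht0
  set U : Set (Set X) := (fun W => f ⁻¹' W) '' V with hUdef
  have hUcov : IsCover U := by
    apply Set.eq_univ_iff_forall.2
    intro x
    have hfx : f x ∈ ⋃₀ V := by rw [hVcov]; exact Set.mem_univ _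
    obtain ⟨W, hW, hfxW⟩ := hfx
    exact ⟨f ⁻¹' W, ⟨W, hW, rfl⟩, hfxW⟩
  have hUpf : PointFinite U := by
    intro x
    apply Set.Finite.subset ((hVpf (f x)).image (fun W => f ⁻¹' W))
    rintro A ⟨⟨W, hW, rfl⟩, hxA⟩
    exact ⟨W, ⟨hW, hxA⟩, rfl⟩
  have hUdiam : covDiam U ≤ ((r : ℝ≥0) : ℝ≥0∞) := by
    simp only [covDiam]
    apply iSup₂_le
    rintro A ⟨W, hW, rfl⟩
    apply EMetric.diam_le
    intro x1 hx1 x2 hx2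
    have h1 : edist (f x1) (f x2) < rhoMod f (r : ℝ) := by
      calc edist (f x1) (f x2) ≤ EMetric.diam W := EMetric.edist_le_diam_of_mem hx1 hx2
        _ ≤ covDiam V := le_iSup₂ (f := fun (W : Set Y) (_ : W ∈ V) => EMetric.diam W) W hW
        _ ≤ (r' : ℝ≥0∞) := hVdiam
        _ < rhoMod f (r : ℝ) := by rw [hr'c]; exact hcrho
    have hdl : dist x1 x2 ≤ (r : ℝ) := by
      by_contra hgt
      push_neg at hgt
      have h2 : rhoMod f (r : ℝ) ≤ edist (f x1) (f x2) :=
        iInf₂_le (f := fun (p : X × X) (_ : p ∈ {p : X × X | (r:ℝ) ≤ dist p.1 p.2}) =>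
          edist (f p.1) (f p.2)) (x1, x2) hgt.le
      exact absurd h1 (not_lt.2 h2)
    have hnn : nndist x1 x2 ≤ r := by rwa [← NNReal.coe_le_coe, coe_nndist]
    rw [edist_nndist]
    exact_mod_cast hnn
  have hLebU : 0 < Leb U := by
    have hmem : ENNReal.ofReal t ∈
        {d : ℝ≥0∞ | ∀ E : Set X, EMetric.diam E < d → ∃ A ∈ U, E ⊆ A} := by
      intro E hE
      have himg : EMetric.diam (f '' E) < d := by
        refine lt_of_le_of_lt ?_ htw
        apply EMetric.diam_le
        rintro _ ⟨x1, hx1, rfl⟩ _ ⟨x2, hx2, rfl⟩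
        have hdist : dist x1 x2 ≤ t := by
          have h3 := (EMetric.edist_le_diam_of_mem hx1 hx2).trans_lt hE
          rw [edist_dist] at h3
          exact ((ENNReal.ofReal_lt_ofReal_iff ht0).1 h3).le
        exact le_iSup₂ (f := fun (p : X × X) (_ : p ∈ {p : X × X | dist p.1 p.2 ≤ t}) =>
          edist (f p.1) (f p.2)) (x1, x2) hdist
      obtain ⟨W, hW, hsub⟩ := hd (f '' E) himg
      exact ⟨f ⁻¹' W, ⟨W, hW, rfl⟩, Set.image_subset_iff.1 hsub⟩
    calc (0:ℝ≥0∞) < ENNReal.ofReal t := ENNReal.ofReal_pos.2 ht0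
      _ ≤ Leb U := le_sSup hmem
  have hfin : Leb U ≤ Δu X r := by
    simp only [Δu]
    exact le_iSup₂ (f := fun (U : Set (Set X))
      (_ : U ∈ {U : Set (Set X) | IsCover U ∧ PointFinite U ∧ covDiam U ≤ ((r:ℝ≥0):ℝ≥0∞)}) =>
      Leb U) U ⟨hUcov, hUpf, hUdiam⟩
  exact hLebU.trans_le hfin
end

section
/- Let X and Y be metric spaces where Y has the coarse Stone property. If there exists a coarse embedding f : X → Y, then X has the coarse Stone property. -/
open ENNReal NNReal Set Filter ZeroAtInfty

theorem stmt13 {X Y : Type*} [MetricSpace X] [MetricSpace Y]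
    (hY : ∀ R : ℝ≥0, Δc Y R < ⊤) (f : X → Y)
    (homega : ∀ t : ℝ, omegaMod f t < ⊤)
    (hrho : Tendsto (rhoMod f) atTop (nhds ⊤)) :
    ∀ R : ℝ≥0, Δc X R < ⊤ := by
  intro R
  set M := omegaMod f (R : ℝ) with hMdef
  have hMlt : M < ⊤ := homega R
  set R' : ℝ≥0 := M.toNNReal + 1 with hR'def
  have hR'M : M < (R' : ℝ≥0∞) := by
    rw [hR'def]
    push_cast
    rw [ENNReal.coe_toNNReal hMlt.ne]
    exact ENNReal.lt_add_right hMlt.ne one_ne_zero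
  have hR' : Δc Y R' < ⊤ := hY R'
  rw [Δc] at hR'
  simp only [iInf_lt_top, mem_setOf_eq] at hR'
  obtain ⟨𝒱, ⟨hcovV, hpfV, hlebV⟩, hdiamV⟩ := hR'
  -- choose t with covDiam 𝒱 < rhoMod f t
  have ht : ∃ t : ℝ, covDiam 𝒱 < rhoMod f t := by
    have := (hrho.eventually (eventually_gt_nhds hdiamV)).exists
    exact this
  obtain ⟨t, ht⟩ := ht
  -- the pulled-back cover
  set U : Set (Set X) := (fun V => f ⁻¹' V) '' 𝒱 with hUdef
  have hcovU : IsCover U := by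
    rw [IsCover, eq_univ_iff_forall]
    intro x
    have : f x ∈ ⋃₀ 𝒱 := by rw [hcovV]; trivial
    obtain ⟨V, hV, hfx⟩ := this
    exact ⟨f ⁻¹' V, ⟨V, hV, rfl⟩, hfx⟩
  have hpfU : PointFinite U := by
    intro x
    apply Set.Finite.subset (((hpfV (f x)).image (fun V => f ⁻¹' V)))
    rintro W ⟨⟨V, hV, rfl⟩, hxW⟩
    exact ⟨V, ⟨hV, hxW⟩, rfl⟩
  have hlebU : (R : ℝ≥0∞) ≤ Leb U := by
    apply le_sSup
    intro E hE
    -- diam (f '' E) ≤ M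
    have hfE : EMetric.diam (f '' E) ≤ M := by
      apply EMetric.diam_le
      rintro _ ⟨x₁, hx₁, rfl⟩ _ ⟨x₂, hx₂, rfl⟩
      have h12 : edist x₁ x₂ < (R : ℝ≥0∞) :=
        lt_of_le_of_lt (EMetric.edist_le_diam_of_mem hx₁ hx₂) hE
      have hd : dist x₁ x₂ ≤ (R : ℝ)  := by
        rw [edist_lt_coe] at h12
        exact_mod_cast h12.le
      exact le_iSup₂_of_le (x₁, x₂) hd le_rfl
    -- find d in Leb set of 𝒱 with M < d
    have : M < Leb 𝒱 := lt_of_lt_of_le hR'M hlebV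
    rw [Leb, lt_sSup_iff] at this
    obtain ⟨d, hd, hMd⟩ := this
    obtain ⟨V, hV, hsub⟩ := hd (f '' E) (lt_of_le_of_lt hfE hMd)
    exact ⟨f ⁻¹' V, ⟨V, hV, rfl⟩, fun x hx => hsub ⟨x, hx, rfl⟩⟩
  have hdiamU : covDiam U ≤ ENNReal.ofReal t := by
    apply iSup₂_le
    rintro _ ⟨V, hV, rfl⟩
    apply EMetric.diam_le
    intro x₁ hx₁ x₂ hx₂
    have hdxy : dist x₁ x₂ ≤ t := by
      by_contra h
      push_neg at h
      have h1 : rhoMod f t ≤ edist (f x₁) (f x₂) := iInf₂_le (x₁, x₂) h.le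
      have h2 : edist (f x₁) (f x₂) ≤ covDiam 𝒱 :=
        le_trans (EMetric.edist_le_diam_of_mem hx₁ hx₂) (le_iSup₂_of_le V hV le_rfl)
      exact absurd (lt_of_le_of_lt (h1.trans h2) ht) (lt_irrefl _)
    calc edist x₁ x₂ = ENNReal.ofReal (dist x₁ x₂) := (edist_dist x₁ x₂)
      _ ≤ ENNReal.ofReal t := ENNReal.ofReal_le_ofReal hdxy
  calc Δc X R ≤ covDiam U := iInf₂_le U ⟨hcovU, hpfU, hlebU⟩
    _ ≤ ENNReal.ofReal t := hdiamU
    _ < ⊤ := ENNReal.ofReal_lt_top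
end

section
/- For any infinite cardinal κ, Δ_{c₀(κ)}^{(c)}(R) = 2R for all R ∈ [0,∞). In particular, for any point-finite cover 𝒰 of c₀(κ) with Lebesgue number ≥ R, one has diam(𝒰) ≥ 2R. -/
open ENNReal NNReal Set Filter ZeroAtInfty

/-- `c₀(ι)`: real-valued functions on the discrete space `ι` vanishing at infinity,
with the sup-norm metric. -/
def c0Space (ι : Type*) : Type _ :=
  letI : TopologicalSpace ι := ⊥
  C₀(ι, ℝ)

noncomputable instance c0Space.metricSpace (ι : Type*) : MetricSpace (c0Space ι) :=
  letI : TopologicalSpace ι := ⊥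
  (inferInstance : MetricSpace C₀(ι, ℝ))

instance c0Space.funLike (ι : Type*) : FunLike (c0Space ι) ι ℝ :=
  letI : TopologicalSpace ι := ⊥
  (inferInstance : FunLike C₀(ι, ℝ) ι ℝ)

/-- The positive cone `c₀⁺(ι)` with the inherited metric. -/
abbrev c0Pos (ι : Type*) : Type _ := {g : c0Space ι // ∀ i, 0 ≤ g i}

open ZeroAtInftyContinuousMap in
section
section aux
variable {ι : Type*} [TopologicalSpace ι] [DiscreteTopology ι]

noncomputable def finsupp0 (f : ι → ℝ) (hf : (Function.support f).Finite) : C₀(ι, ℝ) :=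
  ⟨⟨f, continuous_of_discreteTopology⟩, by
    rw [Filter.cocompact_eq_cofinite]
    refine Filter.Tendsto.congr' ?_ (tendsto_const_nhds (x := (0:ℝ)))
    refine Filter.eventuallyEq_of_mem (s := (Function.support f)ᶜ)
      (f := fun _ => (0:ℝ)) ?_ ?_
    · rw [Filter.mem_cofinite, compl_compl]; exact hf
    · intro i hi
      simp only [Set.mem_compl_iff, Function.mem_support, not_not] at hi; exact hi.symm⟩

@[simp] lemma finsupp0_apply (f : ι → ℝ) (hf) (i : ι) : finsupp0 f hf i = f i := rfl

lemma finite_large (x : C₀(ι, ℝ)) {c : ℝ} (hc : 0 < c) : {i | c ≤ |x i|}.Finite := by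
  have h := zero_at_infty x
  rw [Filter.cocompact_eq_cofinite] at h
  have h2 : x ⁻¹' (Metric.ball 0 c) ∈ Filter.cofinite := h (Metric.ball_mem_nhds (0:ℝ) hc)
  rw [Filter.mem_cofinite] at h2
  refine h2.subset ?_
  intro i hi
  simp only [Set.mem_compl_iff, Set.mem_preimage, Metric.mem_ball, Real.dist_eq, sub_zero]
  exact not_lt.mpr hi

omit [DiscreteTopology ι] in
lemma dist_apply_le (f g : C₀(ι, ℝ)) (i : ι) : |f i - g i| ≤ dist f g := by
  have := BoundedContinuousFunction.dist_coe_le_dist (f := f.toBCF) (g := g.toBCF) i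
  rwa [ZeroAtInftyContinuousMap.dist_toBCF_eq_dist, Real.dist_eq] at this

omit [DiscreteTopology ι] in
lemma dist_le_iff' (f g : C₀(ι, ℝ)) {C : ℝ} (hC : 0 ≤ C) :
    dist f g ≤ C ↔ ∀ i, |f i - g i| ≤ C := by
  rw [← ZeroAtInftyContinuousMap.dist_toBCF_eq_dist,
    BoundedContinuousFunction.dist_le hC]
  simp [Real.dist_eq]

lemma lower_step [Infinite ι]
    (U : Set (Set C₀(ι, ℝ))) (hpf : PointFinite U)
    (r : ℝ≥0) (hr : (r : ℝ≥0∞) < Leb U) : 2 * (r : ℝ≥0∞) ≤ covDiam U := by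
  classical
  obtain ⟨d, hd, hrd⟩ := lt_sSup_iff.mp hr
  set n := (hpf 0).toFinset.card with hn
  set g : Fin (n+1) → ι := fun j => Infinite.natEmbedding ι j.val with hg
  have hginj : Function.Injective g := by
    intro a b h
    exact Fin.val_injective ((Infinite.natEmbedding ι).injective h)
  -- the sign vectors
  set val : (Fin (n+1) → Bool) → Fin (n+1) → ℝ :=
    fun ε j => if ε j then (r:ℝ) else -(r:ℝ) with hval
  set fvec : (Fin (n+1) → Bool) → ι → ℝ :=
    fun ε i => if h : ∃ j, g j = i then val ε h.choose else 0 with hfvec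
  have hfsupp : ∀ ε, (Function.support (fvec ε)).Finite := by
    intro ε
    apply (Set.finite_range g).subset
    intro i hi
    by_contra hni
    apply hi
    simp only [hfvec]
    rw [dif_neg]
    rintro ⟨j, rfl⟩
    exact hni ⟨j, rfl⟩
  have hfval : ∀ ε j, fvec ε (g j) = val ε j := by
    intro ε j
    have h : ∃ j', g j' = g j := ⟨j, rfl⟩
    simp only [hfvec]
    rw [dif_pos h, hginj h.choose_spec]
  have hfabs : ∀ ε i, |fvec ε i| ≤ (r:ℝ) := by
    intro ε i
    simp only [hfvec]
    split
    · simp only [hval]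
      split <;> simp
    · simp
  set x : (Fin (n+1) → Bool) → C₀(ι, ℝ) := fun ε => finsupp0 (fvec ε) (hfsupp ε) with hx
  have hdiam : ∀ ε, EMetric.diam {(0 : C₀(ι, ℝ)), x ε} < d := by
    intro ε
    rw [show EMetric.diam {(0 : C₀(ι, ℝ)), x ε} = edist (0 : C₀(ι, ℝ)) (x ε) from EMetric.diam_pair]
    have h1 : dist (0 : C₀(ι, ℝ)) (x ε) ≤ (r:ℝ) := by
      rw [dist_le_iff' _ _ r.coe_nonneg]
      intro i
      simpa [hx] using hfabs ε i
    calc edist (0 : C₀(ι, ℝ)) (x ε) = ENNReal.ofReal (dist 0 (x ε)) := edist_dist _ _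
    _ ≤ ENNReal.ofReal (r:ℝ) := ENNReal.ofReal_le_ofReal h1
    _ = (r : ℝ≥0∞) := ENNReal.ofReal_coe_nnreal
    _ < d := hrd
  choose V hVU hVsub using fun ε => hd {(0 : C₀(ι, ℝ)), x ε} (hdiam ε)
  have hmaps : ∀ ε, V ε ∈ (hpf 0).toFinset := by
    intro ε
    rw [Set.Finite.mem_toFinset]
    exact ⟨hVU ε, hVsub ε (by simp)⟩
  have hcard : Fintype.card ((hpf 0).toFinset : Finset (Set C₀(ι, ℝ))) <
      Fintype.card (Fin (n+1) → Bool) := by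
    rw [Fintype.card_coe, Fintype.card_fun]
    simp only [Fintype.card_bool, Fintype.card_fin, ← hn]
    calc n < 2 ^ n := Nat.lt_two_pow_self
    _ ≤ 2 ^ (n+1) := Nat.pow_le_pow_right (by norm_num) (Nat.le_succ n)
  obtain ⟨ε, δ, hne, heq⟩ := Fintype.exists_ne_map_eq_of_card_lt
    (fun ε => (⟨V ε, hmaps ε⟩ : ((hpf 0).toFinset : Finset (Set C₀(ι, ℝ))))) hcard
  have hVeq : V ε = V δ := congrArg Subtype.val heq
  obtain ⟨j, hj⟩ := Function.ne_iff.mp hne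
  have hdist : (2 * (r:ℝ)) ≤ dist (x ε) (x δ) := by
    have h1 := dist_apply_le (x ε) (x δ) (g j)
    have h2 : |x ε (g j) - x δ (g j)| = 2 * (r:ℝ) := by
      simp only [hx, finsupp0_apply, hfval, hval]
      rcases Bool.eq_false_or_eq_true (ε j) with h3 | h3 <;>
        rcases Bool.eq_false_or_eq_true (δ j) with h4 | h4
      · exact absurd (h3.trans h4.symm) hj
      · rw [if_pos h3, if_neg (by simp [h4]), show ((r:ℝ) - -r) = 2*r by ring,
          abs_of_nonneg (by positivity)]
      · rw [if_neg (by simp [h3]), if_pos h4, show (-(r:ℝ) - r) = -(2*r) by ring, abs_neg,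
          abs_of_nonneg (by positivity)]
      · exact absurd (h3.trans h4.symm) hj
    rw [h2] at h1
    exact h1
  have hmem1 : x ε ∈ V ε := hVsub ε (by simp)
  have hmem2 : x δ ∈ V ε := hVeq ▸ hVsub δ (by simp)
  calc (2 * r : ℝ≥0∞) = ENNReal.ofReal (2 * (r:ℝ)) := by
        rw [ENNReal.ofReal_mul (by norm_num)]
        simp [ENNReal.ofReal_coe_nnreal]
  _ ≤ ENNReal.ofReal (dist (x ε) (x δ)) := ENNReal.ofReal_le_ofReal hdist
  _ = edist (x ε) (x δ) := (edist_dist _ _).symm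
  _ ≤ EMetric.diam (V ε) := EMetric.edist_le_diam_of_mem hmem1 hmem2
  _ ≤ covDiam U := le_iSup₂ (f := fun (V : Set C₀(ι, ℝ)) (_ : V ∈ U) => EMetric.diam V) (V ε) (hVU ε)

end aux
lemma abs_apply_le_norm {ι : Type*} [TopologicalSpace ι] (x : C₀(ι, ℝ)) (i : ι) :
    |x i| ≤ ‖x‖ := by
  have := dist_apply_le x 0 i
  simpa [dist_zero_right] using this

section upper
variable {ι : Type*} [TopologicalSpace ι] [DiscreteTopology ι]

lemma upper_cover (R e : ℝ≥0) (he : 0 < e) :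
    ∃ U : Set (Set C₀(ι, ℝ)), IsCover U ∧ PointFinite U ∧ (R : ℝ≥0∞) ≤ Leb U ∧
      covDiam U ≤ 2 * (R : ℝ≥0∞) + 2 * (e : ℝ≥0∞) := by
  classical
  set s : ℝ := R + e with hs
  set t : ℝ := R + 2 * e with ht
  have hR0 : (0:ℝ) ≤ R := R.coe_nonneg
  have he0 : (0:ℝ) < e := he
  have hs0 : (0:ℝ) < s := by rw [hs]; linarith
  have ht0 : (0:ℝ) < t := by rw [ht]; linarith
  set Cell : (ι → ℤ) → Set C₀(ι, ℝ) := fun k => {x | ∀ i, |x i - t * k i| ≤ s} with hCell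
  set U : Set (Set C₀(ι, ℝ)) :=
    {V | ∃ k : ι → ℤ, (Function.support k).Finite ∧ V = Cell k} with hU
  have hcell0 : Cell (fun _ => 0) ∈ U :=
    ⟨fun _ => 0, by simp [Function.support], rfl⟩
  -- it is a cover
  have hcover : IsCover U := by
    rw [IsCover, Set.eq_univ_iff_forall]
    intro x
    rw [Set.mem_sUnion]
    set k : ι → ℤ := fun i => if |x i| ≤ s then 0 else round (x i / t) with hk
    have hsupp : (Function.support k).Finite := by
      apply (finite_large x hs0).subset
      intro i hi
      simp only [Function.mem_support, hk] at hi
      by_contra hcon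
      simp only [Set.mem_setOf_eq, not_le] at hcon
      exact hi (if_pos hcon.le)
    refine ⟨Cell k, ⟨k, hsupp, rfl⟩, ?_⟩
    simp only [hCell, Set.mem_setOf_eq]
    intro i
    by_cases hxi : |x i| ≤ s
    · simpa [hk, hxi] using hxi
    · have h1 : |x i / t - round (x i / t)| ≤ 1/2 := abs_sub_round _
      have h2 : |x i - t * round (x i / t)| ≤ t / 2 := by
        have h3 : |x i - t * round (x i / t)| = t * |x i / t - round (x i / t)| := by
          rw [← abs_of_pos ht0, ← abs_mul, abs_of_pos ht0]
          congr 1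
          field_simp
        rw [h3]
        calc t * |x i / t - round (x i / t)| ≤ t * (1/2) :=
              mul_le_mul_of_nonneg_left h1 ht0.le
        _ = t / 2 := by ring
      simp only [hk, if_neg hxi]
      have : t / 2 ≤ s := by rw [ht, hs]; linarith
      push_cast
      linarith
  -- point-finiteness
  have hpf : PointFinite U := by
    intro x
    set B : ℤ := ⌈(‖x‖ + s) / t⌉ with hB
    set F := {i | (e:ℝ) ≤ |x i|} with hF
    have hFfin : F.Finite := finite_large x he0
    haveI := hFfin.to_subtype
    set K : Set (ι → ℤ) := {k | Function.support k ⊆ F ∧ ∀ i, k i ∈ Set.Icc (-B) B} with hK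
    have hKfin : K.Finite := by
      have hres : Set.InjOn (fun k (i : F) => k (i:ι)) K := by
        intro k1 h1 k2 h2 hke
        funext i
        by_cases hiF : i ∈ F
        · exact congrFun hke ⟨i, hiF⟩
        · have e1 : k1 i = 0 := by
            by_contra hne; exact hiF (h1.1 hne)
          have e2 : k2 i = 0 := by
            by_contra hne; exact hiF (h2.1 hne)
          rw [e1, e2]
      refine Set.Finite.of_finite_image ?_ hres
      refine Set.Finite.subset (Set.Finite.pi' (fun _ : F => Set.finite_Icc (-B) B)) ?_
      rintro _ ⟨k, hkK, rfl⟩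
      intro i
      exact hkK.2 i
    refine (hKfin.image Cell).subset ?_
    rintro V ⟨⟨k, hksupp, rfl⟩, hxV⟩
    simp only [hCell, Set.mem_setOf_eq] at hxV
    refine ⟨k, ⟨?_, ?_⟩, rfl⟩
    · intro i hi
      by_contra hiF
      have hxi : |x i| < e := by
        simp only [hF, Set.mem_setOf_eq, not_le] at hiF
        exact hiF
      have hki : k i ≠ 0 := hi
      have h1 : (1:ℝ) ≤ |(k i : ℝ)| := by exact_mod_cast Int.one_le_abs hki
      have h2 : |x i - t * k i| ≤ s := hxV i
      have h3 : t ≤ |t * (k i : ℝ)| := by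
        rw [abs_mul, abs_of_pos ht0]
        nlinarith
      have h4 : |t * (k i : ℝ)| - |x i| ≤ |t * (k i : ℝ) - x i| := abs_sub_abs_le_abs_sub _ _
      rw [abs_sub_comm] at h4
      rw [hs] at h2
      rw [ht] at h3
      linarith
    · intro i
      have h2 : |x i - t * k i| ≤ s := hxV i
      have hxn : |x i| ≤ ‖x‖ := abs_apply_le_norm x i
      have h5 : |t * (k i : ℝ)| - |x i| ≤ |t * (k i : ℝ) - x i| := abs_sub_abs_le_abs_sub _ _
      rw [abs_sub_comm] at h5
      have h3 : |(k i:ℝ)| ≤ (‖x‖ + s)/t := by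
        rw [le_div_iff₀ ht0]
        have h6 : |t * (k i : ℝ)| = |(k i : ℝ)| * t := by
          rw [abs_mul, abs_of_pos ht0]; ring
        linarith [h6 ▸ (by linarith : |t * (k i : ℝ)| ≤ ‖x‖ + s)]
      have h7 : |(k i:ℝ)| ≤ (B:ℝ) := h3.trans (Int.le_ceil _)
      have h8 : |k i| ≤ B := by exact_mod_cast h7
      rw [Set.mem_Icc]
      exact abs_le.mp h8
  -- Lebesgue number ≥ R
  have hleb : (R : ℝ≥0∞) ≤ Leb U := by
    apply le_sSup
    intro E hE
    rcases Set.eq_empty_or_nonempty E with rfl | ⟨x, hxE⟩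
    · exact ⟨Cell (fun _ => 0), hcell0, Set.empty_subset _⟩
    · have hdne : EMetric.diam E ≠ ⊤ := (hE.trans_le le_top).ne
      set D : ℝ := (EMetric.diam E).toReal with hD
      have hD0 : 0 ≤ D := ENNReal.toReal_nonneg
      have hDR : D < R := by
        have := (ENNReal.toReal_lt_toReal hdne ENNReal.coe_ne_top).mpr hE
        simpa [hD] using this
      have key : ∀ y ∈ E, ∀ z ∈ E, ∀ i, |y i - z i| ≤ D := by
        intro y hy z hz i
        refine (dist_apply_le y z i).trans ?_
        rw [dist_edist]
        exact ENNReal.toReal_mono hdne (EMetric.edist_le_diam_of_mem hy hz)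
      set a : ι → ℝ := fun i => sInf ((fun y : C₀(ι, ℝ) => y i) '' E) with ha
      have hbdd : ∀ i, BddBelow ((fun y : C₀(ι, ℝ) => y i) '' E) := by
        intro i
        refine ⟨x i - D, ?_⟩
        rintro _ ⟨y, hy, rfl⟩
        have := key x hxE y hy i
        have := abs_le.mp this
        linarith [this.1]
      have hne : ∀ i, ((fun y : C₀(ι, ℝ) => y i) '' E).Nonempty :=
        fun i => ⟨x i, ⟨x, hxE, rfl⟩⟩
      have ha_le : ∀ i, ∀ y ∈ E, a i ≤ y i := by
        intro i y hy
        exact csInf_le (hbdd i) ⟨y, hy, rfl⟩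
      have hle_a : ∀ i, ∀ y ∈ E, y i ≤ a i + D := by
        intro i y hy
        have : y i - D ≤ a i := by
          apply le_csInf (hne i)
          rintro _ ⟨z, hz, rfl⟩
          have := abs_le.mp (key y hy z hz i)
          linarith [this.1]
        linarith
      set k : ι → ℤ := fun i => if (e:ℝ) ≤ |x i| then ⌈(a i + D - s)/t⌉ else 0 with hk
      have hsupp : (Function.support k).Finite := by
        apply (finite_large x he0).subset
        intro i hi
        simp only [Function.mem_support, hk] at hi
        by_contra hcon
        simp only [Set.mem_setOf_eq, not_le] at hcon
        exact hi (if_neg (not_le.mpr hcon))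
      refine ⟨Cell k, ⟨k, hsupp, rfl⟩, ?_⟩
      intro y hy
      simp only [hCell, Set.mem_setOf_eq]
      intro i
      by_cases hxi : (e:ℝ) ≤ |x i|
      · simp only [hk, if_pos hxi]
        have h1 : (a i + D - s)/t ≤ (⌈(a i + D - s)/t⌉ : ℝ) := Int.le_ceil _
        have h2 : (⌈(a i + D - s)/t⌉ : ℝ) < (a i + D - s)/t + 1 := Int.ceil_lt_add_one _
        have h3 : a i + D - s ≤ t * ⌈(a i + D - s)/t⌉ := by
          rw [div_le_iff₀ ht0] at h1
          linarith
        have h4 : t * (⌈(a i + D - s)/t⌉:ℝ) < a i + D - s + t := by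
          have := mul_lt_mul_of_pos_left h2 ht0
          have h5 : t * ((a i + D - s)/t) = a i + D - s := by field_simp
          linarith [h5 ▸ this]
        have h6 : t ≤ 2*s - D := by rw [ht, hs]; linarith
        have h7 := ha_le i y hy
        have h8 := hle_a i y hy
        rw [abs_le]
        constructor <;> push_cast <;> linarith
      · simp only [hk, if_neg hxi]
        have h1 := abs_le.mp (key y hy x hxE i)
        have h2 : |x i| < e := not_le.mp hxi
        have h3 := abs_le.mp h2.le
        rw [abs_le]
        push_cast
        rw [hs]
        constructor <;> linarith
  -- diameter bound
  have hdiam : covDiam U ≤ 2 * (R : ℝ≥0∞) + 2 * (e : ℝ≥0∞) := by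
    rw [covDiam]
    apply iSup₂_le
    rintro V ⟨k, hk, rfl⟩
    have h2s : 2 * (R : ℝ≥0∞) + 2 * (e : ℝ≥0∞) = ENNReal.ofReal (2*s) := by
      rw [show (2:ℝ)*s = 2*(R:ℝ) + 2*(e:ℝ) by rw [hs]; ring,
        ENNReal.ofReal_add (by positivity) (by positivity),
        ENNReal.ofReal_mul (by norm_num), ENNReal.ofReal_mul (by norm_num),
        ENNReal.ofReal_ofNat, ENNReal.ofReal_coe_nnreal, ENNReal.ofReal_coe_nnreal]
    rw [h2s]
    apply EMetric.diam_le
    intro y hy z hz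
    simp only [hCell, Set.mem_setOf_eq] at hy hz
    have hd : dist y z ≤ 2*s := by
      rw [dist_le_iff' _ _ (by positivity)]
      intro i
      have h1 := hy i
      have h2 := hz i
      calc |y i - z i| ≤ |y i - t * k i| + |t * k i - z i| := abs_sub_le _ _ _
      _ = |y i - t * k i| + |z i - t * k i| := by rw [abs_sub_comm (t * (k i : ℝ))]
      _ ≤ 2 * s := by linarith
    calc edist y z = ENNReal.ofReal (dist y z) := edist_dist _ _
    _ ≤ ENNReal.ofReal (2*s) := ENNReal.ofReal_le_ofReal hd
  exact ⟨U, hcover, hpf, hleb, hdiam⟩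

end upper



section assemble
variable {ι : Type*} [TopologicalSpace ι] [DiscreteTopology ι] [Infinite ι]

lemma lower_main (R : ℝ≥0) (U : Set (Set C₀(ι, ℝ))) (hpf : PointFinite U)
    (hleb : (R : ℝ≥0∞) ≤ Leb U) : 2 * (R : ℝ≥0∞) ≤ covDiam U := by
  by_contra h
  push_neg at h
  have h2 : covDiam U / 2 < (R : ℝ≥0∞) := by
    rw [ENNReal.div_lt_iff (Or.inl two_ne_zero) (Or.inl ENNReal.ofNat_ne_top)]
    rwa [mul_comm] at h
  obtain ⟨r, hr1, hr2⟩ := ENNReal.lt_iff_exists_nnreal_btwn.mp h2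
  have h4 := lower_step U hpf r (lt_of_lt_of_le hr2 hleb)
  have h3 : covDiam U < 2 * r := by
    rw [ENNReal.div_lt_iff (Or.inl two_ne_zero) (Or.inl ENNReal.ofNat_ne_top)] at hr1
    rwa [mul_comm] at hr1
  exact absurd (lt_of_lt_of_le h3 h4) (lt_irrefl _)

theorem main_thm (R : ℝ≥0) :
    Δc C₀(ι, ℝ) R = 2 * (R : ℝ≥0∞) ∧
      ∀ U : Set (Set C₀(ι, ℝ)), IsCover U → PointFinite U → (R : ℝ≥0∞) ≤ Leb U →
        2 * (R : ℝ≥0∞) ≤ covDiam U := by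
  constructor
  · apply le_antisymm
    · apply ENNReal.le_of_forall_pos_le_add
      intro ε hε _
      obtain ⟨U, hc, hp, hl, hd⟩ := upper_cover (ι := ι) R (ε/2) (half_pos hε)
      have h1 : Δc C₀(ι, ℝ) R ≤ covDiam U :=
        iInf₂_le U ⟨hc, hp, hl⟩
      refine h1.trans (hd.trans ?_)
      have : 2 * ((ε/2 : ℝ≥0) : ℝ≥0∞) = (ε : ℝ≥0∞) := by
        rw [show ((ε/2 : ℝ≥0) : ℝ≥0∞) = (ε : ℝ≥0∞) / 2 by
          rw [ENNReal.coe_div (by norm_num)]; norm_num]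
        rw [ENNReal.mul_div_cancel' (by norm_num) (fun h => absurd h ENNReal.ofNat_ne_top)]
      rw [this]
    · apply le_iInf₂
      intro U hU
      exact lower_main R U hU.2.1 hU.2.2
  · intro U _ hp hl
    exact lower_main R U hp hl

end assemble


end

theorem stmt16 (ι : Type*) [Infinite ι] :
    ∀ R : ℝ≥0, Δc (c0Space ι) R = 2 * R ∧
      ∀ U : Set (Set (c0Space ι)), IsCover U → PointFinite U → (R : ℝ≥0∞) ≤ Leb U →
        2 * (R : ℝ≥0∞) ≤ covDiam U := by
  intro R
  letI : TopologicalSpace ι := ⊥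
  haveI : DiscreteTopology ι := ⟨rfl⟩
  exact main_thm R
end

section
/- Let X be a metric space with density character κ. If there exist C ≥ 1 and D ≥ 0 with Δ_X^{(c)}(R) ≤ CR + D for all R ∈ [0,∞), then for every λ > 0, every K > 2(C+λ), and every L > (C+λ)D/λ, there exists a map f : X → c₀⁺(κ) satisfying d_X(x,y) − L ≤ ‖f(x) − f(y)‖_∞ ≤ K·d_X(x,y) for all x, y ∈ X. If D = 0 one may take L = 0, giving a bi-Lipschitz embedding. -/
open ENNReal NNReal Set Filter ZeroAtInfty

universe u

section Helpers

/-! ### c₀ helpers -/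

variable {ι : Type u}

noncomputable def c0mk (g : ι → ℝ) (hg : ∀ ε : ℝ, 0 < ε → {i | ε ≤ |g i|}.Finite) :
    c0Space ι := by
  letI : TopologicalSpace ι := ⊥
  haveI : DiscreteTopology ι := ⟨rfl⟩
  refine (⟨⟨g, continuous_of_discreteTopology⟩, ?_⟩ : C₀(ι, ℝ))
  rw [cocompact_eq_cofinite, Metric.tendsto_nhds]
  intro ε hε
  rw [Filter.eventually_cofinite]
  refine ((hg (ε/2) (by linarith)).subset ?_)
  intro i hi
  simp only [not_lt, mem_setOf_eq] at hi ⊢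
  rw [Real.dist_eq, sub_zero] at hi
  linarith

@[simp] lemma c0mk_apply (g : ι → ℝ) (hg) (i : ι) : (c0mk g hg : c0Space ι) i = g i := rfl

lemma c0dist_le {f g : c0Space ι} {M : ℝ} (hM : 0 ≤ M) (h : ∀ i, |f i - g i| ≤ M) :
    dist f g ≤ M := by
  letI : TopologicalSpace ι := ⊥
  have hd : dist f g = dist (ZeroAtInftyContinuousMap.toBCF (f : C₀(ι, ℝ)))
      (ZeroAtInftyContinuousMap.toBCF (g : C₀(ι, ℝ))) := rfl
  rw [hd]
  refine (BoundedContinuousFunction.dist_le hM).2 fun i => ?_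
  rw [Real.dist_eq]; exact h i

lemma c0dist_ge {f g : c0Space ι} (i : ι) : |f i - g i| ≤ dist f g := by
  letI : TopologicalSpace ι := ⊥
  have h2 := BoundedContinuousFunction.dist_coe_le_dist
    (f := ZeroAtInftyContinuousMap.toBCF (f : C₀(ι, ℝ)))
    (g := ZeroAtInftyContinuousMap.toBCF (g : C₀(ι, ℝ))) i
  rw [Real.dist_eq] at h2
  exact h2

/-! ### cover helpers -/

variable {X : Type u} [MetricSpace X]

lemma exists_cover (C D : ℝ≥0) (h : ∀ R : ℝ≥0, Δc X R ≤ ((C * R + D : ℝ≥0) : ℝ≥0∞))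
    (R : ℝ≥0) (ε : ℝ≥0) (hε : 0 < ε) :
    ∃ U : Set (Set X), IsCover U ∧ PointFinite U ∧ (R : ℝ≥0∞) ≤ Leb U ∧
      covDiam U ≤ ((C * R + D + ε : ℝ≥0) : ℝ≥0∞) := by
  have h1 : Δc X R < ((C * R + D + ε : ℝ≥0) : ℝ≥0∞) := by
    refine lt_of_le_of_lt (h R) ?_
    rw [ENNReal.coe_lt_coe]
    exact lt_add_of_pos_right _ hε
  rw [Δc, iInf_lt_iff] at h1
  obtain ⟨U, hU⟩ := h1
  rw [iInf_lt_iff] at hU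
  obtain ⟨hUm, hlt⟩ := hU
  exact ⟨U, hUm.1, hUm.2.1, hUm.2.2, hlt.le⟩

lemma exists_deep {U : Set (Set X)} {R : ℝ≥0} (hU : (R : ℝ≥0∞) ≤ Leb U)
    (x : X) (t : ℝ) (ht : 0 ≤ t) (htR : 2 * t < R) :
    ∃ V ∈ U, ∀ z : X, dist x z ≤ t → z ∈ V := by
  have h2 : ENNReal.ofReal (2 * t) < Leb U := by
    refine lt_of_lt_of_le ?_ hU
    rw [← ENNReal.ofReal_coe_nnreal]
    exact ENNReal.ofReal_lt_ofReal_iff_of_nonneg (by linarith) |>.2 htR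
  rw [Leb, lt_sSup_iff] at h2
  obtain ⟨d, hd, hdlt⟩ := h2
  have hdiam : EMetric.diam (Metric.closedBall x t) < d := by
    refine lt_of_le_of_lt ?_ hdlt
    refine EMetric.diam_le fun a ha b hb => ?_
    rw [edist_dist]
    refine ENNReal.ofReal_le_ofReal ?_
    have ha' := Metric.mem_closedBall.1 ha
    have hb' := Metric.mem_closedBall.1 hb
    calc dist a b ≤ dist a x + dist x b := dist_triangle _ _ _
      _ ≤ t + t := add_le_add ha' (dist_comm x b ▸ hb')
      _ = 2 * t := by ring
  obtain ⟨V, hV, hsub⟩ := hd _ hdiam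
  exact ⟨V, hV, fun z hz => hsub (Metric.mem_closedBall.2 (dist_comm x z ▸ hz))⟩

lemma dist_le_of_covDiam {U : Set (Set X)} {c : ℝ≥0} (hU : covDiam U ≤ (c : ℝ≥0∞))
    {V : Set X} (hV : V ∈ U) {a b : X} (ha : a ∈ V) (hb : b ∈ V) : dist a b ≤ c := by
  have h1 : EMetric.diam V ≤ (c : ℝ≥0∞) := by
    refine le_trans ?_ hU
    exact le_iSup₂ (f := fun (V : Set X) (_ : V ∈ U) => EMetric.diam V) V hV
  have h2 : edist a b ≤ (c : ℝ≥0∞) := le_trans (EMetric.edist_le_diam_of_mem ha hb) h1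
  have := ENNReal.toReal_mono coe_ne_top h2
  rwa [← dist_edist, ENNReal.coe_toReal] at this

/-! ### depth -/

noncomputable def depth (V : Set X) (t : ℝ) (x : X) : ℝ :=
  (min (ENNReal.ofReal t) (EMetric.infEdist x Vᶜ)).toReal

lemma depth_nonneg (V : Set X) (t : ℝ) (x : X) : 0 ≤ depth V t x := ENNReal.toReal_nonneg

lemma depth_le (V : Set X) {t : ℝ} (ht : 0 ≤ t) (x : X) : depth V t x ≤ t := by
  rw [depth]
  refine le_trans (ENNReal.toReal_mono ofReal_ne_top (min_le_left _ _)) ?_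
  rw [ENNReal.toReal_ofReal ht]

lemma depth_eq_of_deep {V : Set X} {t : ℝ} (ht : 0 ≤ t) {x : X}
    (hx : ∀ z : X, dist x z ≤ t → z ∈ V) : depth V t x = t := by
  have hmin : ENNReal.ofReal t ≤ EMetric.infEdist x Vᶜ := by
    refine le_iInf₂ fun z hz => ?_
    rw [edist_dist]
    refine ENNReal.ofReal_le_ofReal ?_
    by_contra hc
    exact hz (hx z (le_of_not_ge hc))
  rw [depth, min_eq_left hmin, ENNReal.toReal_ofReal ht]

lemma depth_pos_mem {V : Set X} {t : ℝ} {x : X} (h : 0 < depth V t x) : x ∈ V := by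
  by_contra hx
  have h0 : EMetric.infEdist x Vᶜ = 0 := EMetric.infEdist_zero_of_mem hx
  rw [depth, h0, min_eq_right zero_le] at h
  simp at h

lemma depth_zero_of_not_mem {V : Set X} {t : ℝ} {x : X} (hx : x ∉ V) : depth V t x = 0 := by
  have h0 : EMetric.infEdist x Vᶜ = 0 := EMetric.infEdist_zero_of_mem hx
  rw [depth, h0, min_eq_right zero_le]
  simp

lemma depth_lipschitz (V : Set X) {t : ℝ} (x y : X) :
    |depth V t x - depth V t y| ≤ dist x y := by
  have key : ∀ a b : X, depth V t a - depth V t b ≤ dist a b := by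
    intro a b
    have h1 : EMetric.infEdist a Vᶜ ≤ EMetric.infEdist b Vᶜ + edist a b :=
      EMetric.infEdist_le_infEdist_add_edist
    have h2 : min (ENNReal.ofReal t) (EMetric.infEdist a Vᶜ) ≤
        min (ENNReal.ofReal t) (EMetric.infEdist b Vᶜ) + edist a b := by
      calc ENNReal.ofReal t ⊓ EMetric.infEdist a Vᶜ
          ≤ (ENNReal.ofReal t + edist a b) ⊓ (EMetric.infEdist b Vᶜ + edist a b) :=
            min_le_min le_self_add h1
        _ = ENNReal.ofReal t ⊓ EMetric.infEdist b Vᶜ + edist a b := by rw [min_add_add_right]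
    have hfin : min (ENNReal.ofReal t) (EMetric.infEdist b Vᶜ) + edist a b ≠ ⊤ := by
      refine ENNReal.add_ne_top.2 ⟨?_, edist_ne_top a b⟩
      exact ne_top_of_le_ne_top ofReal_ne_top (min_le_left _ _)
    have h3 := ENNReal.toReal_mono hfin h2
    rw [ENNReal.toReal_add (ne_top_of_le_ne_top ofReal_ne_top (min_le_left _ _))
      (edist_ne_top a b)] at h3
    rw [dist_edist, depth, depth]
    linarith
  rw [abs_sub_le_iff]
  exact ⟨key x y, (dist_comm x y) ▸ key y x⟩

/-! ### scales -/

lemma exists_scale {ρ a : ℝ} (hρ : 1 < ρ) (ha : 0 < a) :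
    ∃ n : ℤ, a ≤ ρ ^ n ∧ ρ ^ n ≤ ρ * a := by
  obtain ⟨n, hn⟩ := exists_mem_Ico_zpow ha hρ
  rw [Set.mem_Ico] at hn
  refine ⟨n + 1, hn.2.le, ?_⟩
  rw [zpow_add_one₀ (by positivity)]
  calc ρ ^ n * ρ ≤ a * ρ := by
        have := hn.1
        nlinarith [zpow_pos (lt_trans one_pos hρ) n]
    _ = ρ * a := mul_comm _ _

lemma finite_scales {ρ a M : ℝ} (hρ : 1 < ρ) (ha : 0 < a) :
    {n : ℤ | a ≤ ρ ^ n ∧ ρ ^ n ≤ M}.Finite := by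
  rcases le_or_gt M 0 with hM | hM
  · refine Set.finite_empty.subset fun n hn => ?_
    have := zpow_pos (lt_trans one_pos hρ) n
    simp only [mem_setOf_eq] at hn
    exact absurd (lt_of_lt_of_le this (le_trans hn.2 hM)) (lt_irrefl _)
  · obtain ⟨N1, hN1⟩ := pow_unbounded_of_one_lt M hρ
    obtain ⟨N2, hN2⟩ := pow_unbounded_of_one_lt a⁻¹ hρ
    refine (Set.finite_Icc (-(N2 : ℤ)) (N1 : ℤ)).subset fun n hn => ?_
    simp only [mem_setOf_eq] at hn
    rw [Set.mem_Icc]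
    constructor
    · by_contra hc
      push_neg at hc
      have h1 : ρ ^ n < ρ ^ (-(N2:ℤ)) := zpow_lt_zpow_right₀ hρ (by omega)
      rw [zpow_neg, zpow_natCast] at h1
      have h4 : (ρ ^ N2)⁻¹ < a := by
        rw [inv_lt_comm₀ (by positivity) ha]
        exact hN2
      have := lt_of_lt_of_le (lt_trans h1 h4) hn.1
      exact lt_irrefl _ this
    · by_contra hc
      push_neg at hc
      have h1 : ρ ^ ((N1:ℤ)) < ρ ^ n := zpow_lt_zpow_right₀ hρ (by omega)
      rw [zpow_natCast] at h1
      exact absurd (lt_trans hN1 (lt_of_lt_of_le h1 hn.2)) (lt_irrefl _)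

end Helpers

abbrev Jt {X : Type u} [MetricSpace X] (S : Set X) (U : ℤ → Set (Set X)) : Type u :=
  Σ n : ℤ, {V : Set X // V ∈ U n ∧
    ∃ p : ↥S × ℚ, 0 < ((p.2 : ℝ)) ∧ Metric.ball (p.1 : X) ((p.2 : ℝ)) ⊆ V}

lemma Jt_emb {X : Type u} [MetricSpace X] (S : Set X) (U : ℤ → Set (Set X))
    (hPF : ∀ n, PointFinite (U n)) (ι : Type u) (hκ : Cardinal.aleph0 ≤ Cardinal.mk ι)
    (hmk : Cardinal.mk S ≤ Cardinal.mk ι) : Nonempty (Jt S U ↪ ι) := by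
  classical
  rw [← Cardinal.le_def]
  set Φ : Jt S U → ↥S × ℕ := fun j =>
    ((Classical.choose j.2.2.2).1, Encodable.encode (j.1, (Classical.choose j.2.2.2).2)) with hΦ
  have hfib : ∀ p : ↥S × ℕ, Cardinal.mk (Φ ⁻¹' {p}) ≤ Cardinal.aleph0 := by
    intro p
    have hPfin : (Φ ⁻¹' {p}).Finite := by
      rcases Set.eq_empty_or_nonempty (Φ ⁻¹' {p}) with hE | ⟨j₀, hj₀⟩
      · rw [hE]; exact Set.finite_empty
      · have hkey : ∀ j ∈ Φ ⁻¹' {p}, j.1 = j₀.1 ∧ (p.1 : X) ∈ j.2.1 := by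
          intro j hj
          have h1 : Φ j = p := hj
          have h0 : Φ j₀ = p := hj₀
          have hwit := Classical.choose_spec j.2.2.2
          constructor
          · have he : Encodable.encode (j.1, (Classical.choose j.2.2.2).2) =
                Encodable.encode (j₀.1, (Classical.choose j₀.2.2.2).2) := by
              have := congrArg Prod.snd h1
              have := congrArg Prod.snd h0
              simp only [hΦ] at *
              omega
            have hpe := Encodable.encode_injective he
            exact congrArg Prod.fst hpe
          · have hs : ((Classical.choose j.2.2.2).1 : X) = (p.1 : X) := by
              have := congrArg Prod.fst h1
              simp only [hΦ] at this
              exact congrArg Subtype.val this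
            have hmem : ((Classical.choose j.2.2.2).1 : X) ∈ j.2.1 :=
              hwit.2 (Metric.mem_ball_self hwit.1)
            rwa [hs] at hmem
        refine Set.Finite.of_finite_image (f := fun j => (j.2.1 : Set X)) ?_ ?_
        · refine ((hPF j₀.1 (p.1 : X)).subset ?_)
          rintro W ⟨j, hj, rfl⟩
          obtain ⟨hn, hmem⟩ := hkey j hj
          exact ⟨hn ▸ j.2.2.1, hmem⟩
        · rintro j hj j' hj' hval
          obtain ⟨hn, -⟩ := hkey j hj
          obtain ⟨hn', -⟩ := hkey j' hj'
          rcases j with ⟨n, V, hV⟩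
          rcases j' with ⟨n', V', hV'⟩
          simp only at hn hn' hval
          subst hn; subst hn'
          exact Sigma.ext rfl (heq_of_eq (Subtype.ext hval))
    haveI := hPfin.countable.to_subtype
    exact Cardinal.mk_le_aleph0
  have h1 : Cardinal.mk (Jt S U) ≤ Cardinal.mk (↥S × ℕ) * Cardinal.aleph0 :=
    Cardinal.mk_le_mk_mul_of_mk_preimage_le Φ hfib
  have h2 : Cardinal.mk (↥S × ℕ) ≤ Cardinal.mk ι := by
    have he : Cardinal.mk (↥S × ℕ) = Cardinal.mk ↥S * Cardinal.aleph0 := by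
      rw [Cardinal.mk_prod]
      simp
    rw [he]
    calc Cardinal.mk ↥S * Cardinal.aleph0 ≤ Cardinal.mk ι * Cardinal.aleph0 :=
          mul_le_mul_left hmk _
      _ = Cardinal.mk ι := Cardinal.mul_eq_left hκ hκ Cardinal.aleph0_ne_zero
  calc Cardinal.mk (Jt S U) ≤ Cardinal.mk (↥S × ℕ) * Cardinal.aleph0 := h1
    _ ≤ Cardinal.mk ι * Cardinal.aleph0 := mul_le_mul_left h2 _
    _ = Cardinal.mk ι := Cardinal.mul_eq_left hκ hκ Cardinal.aleph0_ne_zero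

set_option maxHeartbeats 2000000 in
/-- Main construction lemma. -/
lemma mainEmbed {X : Type u} [MetricSpace X] (C D : ℝ≥0) (hC : 1 ≤ C)
    (h : ∀ R : ℝ≥0, Δc X R ≤ ((C * R + D : ℝ≥0) : ℝ≥0∞))
    (ι : Type u) (hι : Cardinal.mk ι = densChar X)
    (b ρ c γ L : ℝ) (hρ : 1 < ρ) (hc : 0 < c) (hγ : 0 < γ) (hb0 : 1 ≤ b)
    (hb1 : (2 * (C : ℝ) + γ) * ρ < b) (hb2 : 2 * (c + 1) * ρ ≤ b)
    (hLD : (D : ℝ) ≤ L) (hL0 : 0 ≤ L) :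
    ∃ f : X → c0Pos ι, ∀ x y : X,
      dist x y - L ≤ dist (f x) (f y) ∧ dist (f x) (f y) ≤ b * dist x y := by
  classical
  rcases isEmpty_or_nonempty X with hX | hX
  · exact ⟨fun x => isEmptyElim x, fun x => isEmptyElim x⟩
  obtain ⟨x₀⟩ := hX
  have hCpos : (0:ℝ) < C := lt_of_lt_of_le one_pos hC
  have hbpos : (0:ℝ) < b := lt_of_lt_of_le one_pos hb0
  have hρpos : (0:ℝ) < ρ := lt_trans one_pos hρ
  have hmem : densChar X ∈ {c : Cardinal | ∃ s : Set X, Dense s ∧ Cardinal.mk s = c} :=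
    csInf_mem ⟨Cardinal.mk (univ : Set X), univ, dense_univ, rfl⟩
  obtain ⟨S, hS, hmkS⟩ := hmem
  rcases lt_or_ge (Cardinal.mk S) Cardinal.aleph0 with hfin | hinf
  · -- finite (Kuratowski) case
    have hSfin : S.Finite := Cardinal.lt_aleph0_iff_set_finite.1 hfin
    have hSuniv : S = univ := by
      have h1 : closure S = S := hSfin.isClosed.closure_eq
      rw [← h1]
      exact hS.closure_eq
    have hmkXι : Cardinal.mk ι = Cardinal.mk X := by
      rw [hι, ← hmkS, hSuniv, Cardinal.mk_univ]
    obtain ⟨e⟩ := Cardinal.eq.1 hmkXι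
    haveI : Finite X := by
      rw [← Set.finite_univ_iff, ← hSuniv]
      exact hSfin
    haveI : Finite ι := Finite.of_equiv X e.symm
    set f : X → c0Pos ι := fun x =>
      ⟨c0mk (fun i => dist x (e i)) (fun ε hε => Set.toFinite _), fun i => dist_nonneg⟩ with hf
    refine ⟨f, fun x y => ?_⟩
    have hsub : dist (f x) (f y) = dist ((f x) : c0Space ι) ((f y) : c0Space ι) :=
      Subtype.dist_eq _ _
    have hub : dist ((f x) : c0Space ι) ((f y) : c0Space ι) ≤ dist x y := by
      refine c0dist_le dist_nonneg fun i => ?_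
      simp only [hf, c0mk_apply]
      exact abs_dist_sub_le _ _ _
    have hlb : dist x y ≤ dist ((f x) : c0Space ι) ((f y) : c0Space ι) := by
      have hge := c0dist_ge (f := ((f x) : c0Space ι)) (g := ((f y) : c0Space ι)) (e.symm x)
      simp only [hf, c0mk_apply, Equiv.apply_symm_apply] at hge
      rw [dist_self, zero_sub, abs_neg, abs_of_nonneg dist_nonneg, dist_comm y x] at hge
      exact hge
    constructor
    · rw [hsub]; linarith
    · rw [hsub]
      calc dist ((f x) : c0Space ι) ((f y) : c0Space ι) ≤ dist x y := hub
        _ ≤ b * dist x y := le_mul_of_one_le_left dist_nonneg hb0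
  · -- infinite case
    have hκ : Cardinal.aleph0 ≤ Cardinal.mk ι := by rw [hι, ← hmkS]; exact hinf
    set δ : ℝ := γ / (2 * C) with hδ
    have hδpos : 0 < δ := by positivity
    set τ : ℤ → ℝ := fun n => ρ ^ n with hτ
    have hτpos : ∀ n, 0 < τ n := fun n => zpow_pos hρpos n
    have hcov : ∀ n : ℤ, ∃ Un : Set (Set X), IsCover Un ∧ PointFinite Un ∧
        ((Real.toNNReal ((2 + δ) * τ n) : ℝ≥0) : ℝ≥0∞) ≤ Leb Un ∧
        covDiam Un ≤ ((C * Real.toNNReal ((2 + δ) * τ n) + D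
          + Real.toNNReal (γ / 2 * τ n) : ℝ≥0) : ℝ≥0∞) := by
      intro n
      refine exists_cover C D h _ _ ?_
      rw [Real.toNNReal_pos]
      have := hτpos n
      positivity
    choose U hU1 hU2 hU3 hU4 using hcov
    have hdiam : ∀ (n : ℤ) (V : Set X), V ∈ U n → ∀ a b' : X, a ∈ V → b' ∈ V →
        dist a b' ≤ (2 * C + γ) * τ n + D := by
      intro n V hV a b' ha hb'
      have h1 := dist_le_of_covDiam (hU4 n) hV ha hb'
      have h2 : ((C * Real.toNNReal ((2 + δ) * τ n) + D + Real.toNNReal (γ / 2 * τ n) : ℝ≥0) : ℝ)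
          = C * ((2 + δ) * τ n) + D + γ / 2 * τ n := by
        push_cast
        rw [Real.coe_toNNReal _ (by nlinarith [hτpos n]), Real.coe_toNNReal _ (by nlinarith [hτpos n])]
      rw [h2] at h1
      have hCδ : (C:ℝ) * δ = γ / 2 := by rw [hδ]; field_simp
      nlinarith [hτpos n]
    have hdeep : ∀ (n : ℤ) (x : X), ∃ V ∈ U n, ∀ z : X, dist x z ≤ τ n → z ∈ V := by
      intro n x
      refine exists_deep (hU3 n) x (τ n) (hτpos n).le ?_
      rw [Real.coe_toNNReal _ (by nlinarith [hτpos n])]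
      nlinarith [hτpos n, hδpos]
    obtain ⟨e⟩ := Jt_emb S U hU2 ι hκ (by rw [hmkS, ← hι])
    set F : Jt S U → X → ℝ := fun j x =>
      b * min (depth j.2.1 (τ j.1) x) (max 0 (dist x x₀ - c * τ j.1)) with hF
    have hFnonneg : ∀ j x, 0 ≤ F j x := fun j x =>
      mul_nonneg hbpos.le (le_min (depth_nonneg _ _ _) (le_max_left _ _))
    have hFle : ∀ j x, F j x ≤ b * τ j.1 := fun j x =>
      mul_le_mul_of_nonneg_left ((min_le_left _ _).trans (depth_le _ (hτpos _).le x)) hbpos.le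
    have hFramp : ∀ j x, F j x ≤ b * max 0 (dist x x₀ - c * τ j.1) := fun j x =>
      mul_le_mul_of_nonneg_left (min_le_right _ _) hbpos.le
    have hFdep : ∀ j x, F j x ≤ b * depth j.2.1 (τ j.1) x := fun j x =>
      mul_le_mul_of_nonneg_left (min_le_left _ _) hbpos.le
    have hFlip : ∀ j x y, |F j x - F j y| ≤ b * dist x y := by
      intro j x y
      simp only [hF]
      rw [← mul_sub, abs_mul, abs_of_pos hbpos]
      refine mul_le_mul_of_nonneg_left ?_ hbpos.le
      refine le_trans (abs_min_sub_min_le_max _ _ _ _)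
        (max_le (depth_lipschitz _ _ _) ?_)
      have hmm := abs_max_sub_max_le_abs (dist x x₀ - c * τ j.1) (dist y x₀ - c * τ j.1) 0
      rw [max_comm (dist x x₀ - c * τ j.1) 0, max_comm (dist y x₀ - c * τ j.1) 0] at hmm
      refine le_trans hmm ?_
      rw [sub_sub_sub_cancel_right]
      exact abs_dist_sub_le _ _ _
    have hFfin : ∀ (x : X) (ε : ℝ), 0 < ε → {j : Jt S U | ε ≤ F j x}.Finite := by
      intro x ε hε
      have hN : {n : ℤ | ε / b ≤ τ n ∧ τ n ≤ dist x x₀ / c}.Finite :=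
        finite_scales hρ (by positivity)
      have hpern : ∀ n : ℤ, ((Sigma.mk n '' {V | x ∈ (V : Set X)}) : Set (Jt S U)).Finite := by
        intro n
        refine Set.Finite.image _ ?_
        refine Set.Finite.subset (((hU2 n) x).preimage (Subtype.val_injective.injOn)) ?_
        intro V hV
        exact ⟨V.2.1, hV⟩
      refine Set.Finite.subset (Set.Finite.biUnion hN (fun n _ => hpern n)) ?_
      · rintro ⟨n, V⟩ hj
        simp only [mem_setOf_eq] at hj
        have hτn1 : ε / b ≤ τ n := by
          rw [div_le_iff₀ hbpos]
          have := hFle ⟨n, V⟩ x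
          simp only at this
          rw [mul_comm] at this
          linarith
        have hτn2 : τ n ≤ dist x x₀ / c := by
          rw [le_div_iff₀ hc]
          have h1 := hFramp ⟨n, V⟩ x
          simp only at h1
          have h2 : 0 < max 0 (dist x x₀ - c * τ n) := by
            by_contra hcon
            push_neg at hcon
            nlinarith
          rw [max_eq_right_iff.2 ?_] at h1
          · nlinarith
          · by_contra hcon
            push_neg at hcon
            rw [max_eq_left (by linarith)] at h2
            exact lt_irrefl _ h2
        have hxV : x ∈ (V : Set X) := by
          refine depth_pos_mem (V := (V : Set X)) (t := τ n) (x := x) ?_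
          have h1 := hFdep ⟨n, V⟩ x
          simp only at h1
          nlinarith
        exact Set.mem_biUnion (show n ∈ {n : ℤ | ε / b ≤ τ n ∧ τ n ≤ dist x x₀ / c}
          from ⟨hτn1, hτn2⟩) ⟨V, hxV, rfl⟩
    have hgfin : ∀ x : X, ∀ ε : ℝ, 0 < ε →
        {i : ι | ε ≤ |Function.extend e (fun j => F j x) (fun _ => 0) i|}.Finite := by
      intro x ε hε
      refine ((hFfin x ε hε).image e).subset ?_
      intro i hi
      simp only [mem_setOf_eq] at hi
      by_cases hr : ∃ j, e j = i
      · obtain ⟨j, rfl⟩ := hr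
        rw [e.injective.extend_apply] at hi
        exact ⟨j, by rwa [abs_of_nonneg (hFnonneg j x)] at hi, rfl⟩
      · rw [Function.extend_apply' _ _ _ hr] at hi
        simp at hi
        linarith
    set f : X → c0Pos ι := fun x =>
      ⟨c0mk (Function.extend e (fun j => F j x) (fun _ => 0)) (hgfin x), by
        intro i
        rw [c0mk_apply]
        by_cases hr : ∃ j, e j = i
        · obtain ⟨j, rfl⟩ := hr
          rw [e.injective.extend_apply]
          exact hFnonneg j x
        · rw [Function.extend_apply' _ _ _ hr]⟩ with hf
    have hfapp : ∀ (x : X) (j : Jt S U), ((f x) : c0Space ι) (e j) = F j x := by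
      intro x j
      simp only [hf, c0mk_apply]
      exact e.injective.extend_apply _ _ _
    have hfapp' : ∀ (x : X) (i : ι), (¬ ∃ j, e j = i) → ((f x) : c0Space ι) i = 0 := by
      intro x i hr
      simp only [hf, c0mk_apply]
      exact Function.extend_apply' _ _ _ hr
    -- upper bound
    have hub : ∀ x y : X, dist ((f x) : c0Space ι) ((f y) : c0Space ι) ≤ b * dist x y := by
      intro x y
      refine c0dist_le (by positivity) fun i => ?_
      by_cases hr : ∃ j, e j = i
      · obtain ⟨j, rfl⟩ := hr
        rw [hfapp, hfapp]
        exact hFlip j x y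
      · rw [hfapp' x i hr, hfapp' y i hr]
        simp
        positivity
    -- lower bound key
    have key : ∀ p q : X, L < dist p q → dist p q ≤ 2 * dist p x₀ →
        dist p q - L ≤ dist ((f p) : c0Space ι) ((f q) : c0Space ι) := by
      intro p q hLpq hhalf
      set d := dist p q with hd
      have hdL : 0 < d - L := by linarith
      have hα : 0 < (d - L) / b := by positivity
      obtain ⟨n, hn1, hn2⟩ := exists_scale hρ hα
      have hτn1 : (d - L) / b ≤ τ n := hn1
      have hτn2 : τ n ≤ ρ * ((d - L) / b) := hn2
      have hact : (c + 1) * τ n ≤ dist p x₀ := by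
        have h1 : (c + 1) * τ n ≤ (c + 1) * (ρ * ((d - L) / b)) :=
          mul_le_mul_of_nonneg_left hτn2 (by linarith)
        have h2 : ((c + 1) * ρ) * ((d - L) / b) ≤ (b / 2) * ((d - L) / b) :=
          mul_le_mul_of_nonneg_right (by linarith) (by positivity)
        have h3 : (b / 2) * ((d - L) / b) = (d - L) / 2 := by
          field_simp
        have h4 : (c + 1) * (ρ * ((d - L) / b)) = ((c + 1) * ρ) * ((d - L) / b) := by ring
        have h5 : d ≤ 2 * dist p x₀ := hhalf
        linarith
      obtain ⟨V, hV, hdeepV⟩ := hdeep n p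
      obtain ⟨s', hs'⟩ := (Metric.dense_iff.1 hS p (τ n / 3) (by positivity))
      have hs'1 : dist s' p < τ n / 3 := Metric.mem_ball.1 hs'.1
      obtain ⟨qq, hq1, hq2⟩ := exists_rat_btwn (show τ n / 3 < τ n / 2 by nlinarith [hτpos n])
      have hq0 : (0:ℝ) < (qq : ℝ) := lt_trans (by positivity) hq1
      have hball : Metric.ball (s' : X) ((qq : ℝ)) ⊆ V := by
        intro z hz
        refine hdeepV z ?_
        have hz1 : dist z s' < (qq : ℝ) := Metric.mem_ball.1 hz
        calc dist p z ≤ dist p s' + dist s' z := dist_triangle _ _ _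
          _ = dist s' p + dist z s' := by rw [dist_comm p s', dist_comm s' z]
          _ ≤ τ n / 3 + τ n / 2 := by linarith
          _ ≤ τ n := by nlinarith [hτpos n]
      set j : Jt S U := ⟨n, ⟨V, hV, ⟨(⟨s', hs'.2⟩ : ↥S), qq⟩, hq0, hball⟩⟩ with hj
      have hdeppτ : depth V (τ n) p = τ n := depth_eq_of_deep (hτpos n).le hdeepV
      have hFpshape : F j p = b * min (depth V (τ n) p) (max 0 (dist p x₀ - c * τ n)) := rfl
      have hFp : F j p = b * τ n := by
        rw [hFpshape, hdeppτ, min_eq_left ?_]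
        refine le_max_of_le_right ?_
        linarith
      have hqnotV : q ∉ V := by
        intro hqV
        have hpV : p ∈ V := hdeepV p (by rw [dist_self]; exact (hτpos n).le)
        have hdb := hdiam n V hV p q hpV hqV
        have t1 : (2*(C:ℝ)+γ) * τ n ≤ (2*(C:ℝ)+γ) * (ρ * ((d-L)/b)) :=
          mul_le_mul_of_nonneg_left hτn2 (by positivity)
        have t2 : ((2*(C:ℝ)+γ) * ρ) * ((d-L)/b) < b * ((d-L)/b) :=
          mul_lt_mul_of_pos_right hb1 hα
        have t3 : b * ((d-L)/b) = d - L := by field_simp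
        have t4 : (2*(C:ℝ)+γ) * (ρ * ((d-L)/b)) = ((2*(C:ℝ)+γ) * ρ) * ((d-L)/b) := by ring
        have hDL : (D:ℝ) ≤ L := hLD
        rw [← hd] at hdb
        linarith
      have hFqshape : F j q = b * min (depth V (τ n) q) (max 0 (dist q x₀ - c * τ n)) := rfl
      have hFq : F j q = 0 := by
        rw [hFqshape, depth_zero_of_not_mem hqnotV, min_eq_left (le_max_left _ _), mul_zero]
      have hco := c0dist_ge (f := ((f p) : c0Space ι)) (g := ((f q) : c0Space ι)) (e j)
      rw [hfapp, hfapp, hFq, sub_zero, abs_of_nonneg (hFnonneg j p), hFp] at hco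
      have hfin2 : d - L ≤ b * τ n := by
        have t5 : b * ((d - L)/b) ≤ b * τ n := mul_le_mul_of_nonneg_left hτn1 hbpos.le
        have t3 : b * ((d-L)/b) = d - L := by field_simp
        linarith
      linarith
    refine ⟨f, fun x y => ?_⟩
    have hsub : dist (f x) (f y) = dist ((f x) : c0Space ι) ((f y) : c0Space ι) :=
      Subtype.dist_eq _ _
    constructor
    · rcases le_or_gt (dist x y) L with hxy | hxy
      · have h0 : (0:ℝ) ≤ dist (f x) (f y) := dist_nonneg
        linarith
      · rcases le_total (dist y x₀) (dist x x₀) with hcase | hcase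
        · have hk := key x y hxy (by
            have h1 := dist_triangle x x₀ y
            rw [dist_comm x₀ y] at h1
            linarith)
          rw [hsub]; linarith
        · have hk := key y x (by rwa [dist_comm]) (by
            have h1 := dist_triangle y x₀ x
            rw [dist_comm x₀ x] at h1
            linarith)
          rw [hsub, dist_comm x y, dist_comm ((f x) : c0Space ι) ((f y) : c0Space ι)]
          exact hk
    · rw [hsub]; exact hub x y


theorem stmt17 {X : Type u} [MetricSpace X] (C D : ℝ≥0) (hC : 1 ≤ C)
    (h : ∀ R : ℝ≥0, Δc X R ≤ ((C * R + D : ℝ≥0) : ℝ≥0∞))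
    (ι : Type u) (hι : Cardinal.mk ι = densChar X)
    (lam K L : ℝ) (hlam : 0 < lam) (hK : 2 * ((C : ℝ) + lam) < K)
    (hL : ((C : ℝ) + lam) * (D : ℝ) / lam < L) :
    (∃ f : X → c0Pos ι,
      ∀ x y : X, dist x y - L ≤ dist (f x) (f y) ∧ dist (f x) (f y) ≤ K * dist x y) ∧
    (D = 0 → ∃ f : X → c0Pos ι,
      ∀ x y : X, dist x y ≤ dist (f x) (f y) ∧ dist (f x) (f y) ≤ K * dist x y) := by
  have hCpos : (0:ℝ) < C := lt_of_lt_of_le one_pos (by exact_mod_cast hC)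
  have hC1 : (1:ℝ) ≤ C := by exact_mod_cast hC
  have hDnn : (0:ℝ) ≤ D := D.coe_nonneg
  set ρ : ℝ := ((C:ℝ) + lam) / C with hρdef
  have hρ : 1 < ρ := by
    rw [hρdef, lt_div_iff₀ hCpos]
    linarith
  have hρpos : 0 < ρ := lt_trans one_pos hρ
  have h2Cρ : 2 * (C:ℝ) * ρ = 2 * ((C:ℝ) + lam) := by
    rw [hρdef]
    field_simp
  set b : ℝ := (K + 2 * ((C:ℝ) + lam)) / 2 with hbdef
  have hbK : b < K := by rw [hbdef]; linarith
  have hb2C : 2 * (C:ℝ) * ρ < b := by rw [h2Cρ, hbdef]; linarith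
  set γ : ℝ := (b - 2 * (C:ℝ) * ρ) / (2 * ρ) with hγdef
  have hγpos : 0 < γ := by
    rw [hγdef]
    exact div_pos (by linarith) (by linarith)
  have hb1 : (2 * (C:ℝ) + γ) * ρ < b := by
    have hexp : (2 * (C:ℝ) + γ) * ρ = 2 * (C:ℝ) * ρ + (b - 2 * (C:ℝ) * ρ) / 2 := by
      rw [hγdef]
      field_simp
    rw [hexp]
    linarith
  set c : ℝ := b / (2 * ρ) - 1 with hcdef
  have hcpos : 0 < c := by
    rw [hcdef]
    have h2ρb : 2 * ρ < b := by nlinarith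
    rw [sub_pos, lt_div_iff₀ (by linarith)]
    linarith
  have hb2 : 2 * (c + 1) * ρ = b := by
    rw [hcdef]
    field_simp
    ring
  have hb0 : 1 ≤ b := by nlinarith
  constructor
  · have hLD : (D:ℝ) ≤ L := by
      have hstep : (D:ℝ) ≤ ((C:ℝ)+lam) * D / lam := by
        rw [le_div_iff₀ hlam]
        nlinarith
      linarith
    have hL0 : (0:ℝ) ≤ L := le_trans hDnn hLD
    obtain ⟨f, hf⟩ := mainEmbed C D hC h ι hι b ρ c γ L hρ hcpos hγpos hb0 hb1
      (le_of_eq hb2) hLD hL0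
    refine ⟨f, fun x y => ⟨(hf x y).1, le_trans (hf x y).2 ?_⟩⟩
    exact mul_le_mul_of_nonneg_right hbK.le dist_nonneg
  · intro hD0
    obtain ⟨f, hf⟩ := mainEmbed C D hC h ι hι b ρ c γ 0 hρ hcpos hγpos hb0 hb1
      (le_of_eq hb2) (by rw [hD0]; simp) le_rfl
    refine ⟨f, fun x y => ⟨?_, le_trans (hf x y).2 ?_⟩⟩
    · have h1 := (hf x y).1
      linarith
    · exact mul_le_mul_of_nonneg_right hbK.le dist_nonneg
end

section
/- A metric space X admits a bi-Lipschitz embedding into c₀(κ) for some cardinal κ if and only if there exists C ∈ [0,∞) such that Δ_X^{(c)}(R) ≤ CR for all R ∈ [0,∞); and X admits a coarse Lipschitz embedding into some c₀(κ) if and only if there exist C, D ∈ [0,∞) with Δ_X^{(c)}(R) ≤ CR + D for all R. -/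
open ENNReal NNReal Set Filter ZeroAtInfty

universe u

namespace Aux18

section c0lemmas

variable {ι : Type*}

theorem c0_dist_coord (f g : c0Space ι) (i : ι) : dist (f i) (g i) ≤ dist f g := by
  letI : TopologicalSpace ι := ⊥
  haveI : DiscreteTopology ι := ⟨rfl⟩
  show dist ((f : C₀(ι,ℝ)) i) ((g : C₀(ι,ℝ)) i) ≤ dist (f : C₀(ι,ℝ)) (g : C₀(ι,ℝ))
  erw [← ZeroAtInftyContinuousMap.dist_toBCF_eq_dist]
  exact BoundedContinuousFunction.dist_coe_le_dist
    (f := ZeroAtInftyContinuousMap.toBCF (f : C₀(ι,ℝ)))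
    (g := ZeroAtInftyContinuousMap.toBCF (g : C₀(ι,ℝ))) i

theorem c0_dist_le (f g : c0Space ι) (C : ℝ) (hC : 0 ≤ C)
    (h : ∀ i, dist (f i) (g i) ≤ C) : dist f g ≤ C := by
  letI : TopologicalSpace ι := ⊥
  haveI : DiscreteTopology ι := ⟨rfl⟩
  show dist (f : C₀(ι,ℝ)) (g : C₀(ι,ℝ)) ≤ C
  erw [← ZeroAtInftyContinuousMap.dist_toBCF_eq_dist]
  exact (BoundedContinuousFunction.dist_le hC).2 h

theorem c0_finite (g : c0Space ι) (ε : ℝ) (hε : 0 < ε) : {i | ε ≤ |g i|}.Finite := by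
  letI : TopologicalSpace ι := ⊥
  haveI : DiscreteTopology ι := ⟨rfl⟩
  have hz := (g : C₀(ι,ℝ)).zero_at_infty'
  rw [Filter.cocompact_eq_cofinite, Metric.tendsto_nhds] at hz
  have h2 := hz ε hε
  rw [Filter.eventually_cofinite] at h2
  refine h2.subset ?_
  intro i hi
  simp only [mem_setOf_eq, not_lt, Real.dist_eq, sub_zero] at hi ⊢
  exact hi

noncomputable def mkc0 (g : ι → ℝ) (h : ∀ ε > 0, {i | ε ≤ |g i|}.Finite) : c0Space ι :=
  letI : TopologicalSpace ι := ⊥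
  haveI : DiscreteTopology ι := ⟨rfl⟩
  (⟨⟨g, continuous_of_discreteTopology⟩, by
    rw [Filter.cocompact_eq_cofinite, Metric.tendsto_nhds]
    intro ε hε
    rw [Filter.eventually_cofinite]
    refine (h ε hε).subset ?_
    intro i hi
    simp only [mem_setOf_eq, not_lt, Real.dist_eq, sub_zero] at hi ⊢
    exact hi⟩ : C₀(ι, ℝ))

theorem mkc0_apply (g : ι → ℝ) (h : ∀ ε > 0, {i | ε ≤ |g i|}.Finite) (i : ι) :
    mkc0 g h i = g i := rfl

end c0lemmas

theorem dcZero (X : Type u) [MetricSpace X] : Δc X 0 ≤ 0 := by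
  have hmem : (Set.range fun x : X => ({x} : Set X)) ∈
      {U : Set (Set X) | IsCover U ∧ PointFinite U ∧ (0:ℝ≥0∞) ≤ Leb U} := by
    refine ⟨?_, ?_, by simp⟩
    · ext x
      simp only [mem_sUnion, mem_range, mem_univ, iff_true]
      exact ⟨{x}, ⟨x, rfl⟩, rfl⟩
    · intro x
      refine (Set.finite_singleton ({x} : Set X)).subset ?_
      rintro V ⟨⟨y, rfl⟩, hx⟩
      simp only [mem_singleton_iff] at hx ⊢
      rw [hx]
  refine le_trans (iInf₂_le _ hmem) ?_
  refine iSup₂_le ?_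
  rintro V ⟨y, rfl⟩
  exact le_of_eq Metric.ediam_singleton

theorem le_infDist' {X : Type*} [MetricSpace X] {s : Set X} {x : X} {b : ℝ}
    (hs : s.Nonempty) (h : ∀ y ∈ s, b ≤ dist x y) : b ≤ Metric.infDist x s :=
  le_of_not_gt fun hl => by
    obtain ⟨y, hy, hxy⟩ := (Metric.infDist_lt_iff hs).1 hl
    exact absurd hxy (not_lt.2 (h y hy))


theorem lemA {X : Type u} [MetricSpace X] (x₀ : X) (C' D' : ℝ) (hC : 1 ≤ C') (hD : 0 ≤ D')
    (hcov : ∀ n : ℤ, ∃ U : Set (Set X), PointFinite U ∧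
      (∀ E : Set X, EMetric.diam E ≤ ENNReal.ofReal ((2:ℝ)^(n-1)) → ∃ V ∈ U, E ⊆ V) ∧
      (∀ V ∈ U, ∀ x y : X, x ∈ V → y ∈ V → dist x y ≤ C' * (2:ℝ)^n + D')) :
    ∃ f : X → c0Space (ℤ × Set X), ∀ x y : X,
      dist x y / (8*C') - D' ≤ dist (f x) (f y) ∧ dist (f x) (f y) ≤ dist x y := by
  classical
  choose U hPF hLeb hDiam using hcov
  set gf : X → ℤ × Set X → ℝ := fun x p =>
    if p.2 ∈ U p.1 then
      min (min ((2:ℝ)^(p.1-1)) (Metric.infDist x p.2ᶜ)) (max 0 (dist x x₀ - (2:ℝ)^(p.1-2)))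
    else 0 with hgf
  have hg_nonneg : ∀ x p, 0 ≤ gf x p := by
    intro x p
    rw [hgf]
    dsimp only
    split
    · exact le_min (le_min (by positivity) Metric.infDist_nonneg) (le_max_left _ _)
    · exact le_refl 0
  have hg_lip : ∀ x y p, |gf x p - gf y p| ≤ dist x y := by
    intro x y p
    rw [hgf]
    dsimp only
    split
    · refine le_trans (abs_min_sub_min_le_max _ _ _ _) (max_le ?_ ?_)
      · refine le_trans (abs_min_sub_min_le_max _ _ _ _) (max_le ?_ ?_)
        · simpa using dist_nonneg
        · have h1 : Metric.infDist x p.2ᶜ ≤ Metric.infDist y p.2ᶜ + dist x y :=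
            Metric.infDist_le_infDist_add_dist
          have h2 : Metric.infDist y p.2ᶜ ≤ Metric.infDist x p.2ᶜ + dist y x :=
            Metric.infDist_le_infDist_add_dist
          rw [dist_comm y x] at h2
          rw [abs_le]
          constructor <;> linarith
      · refine le_trans (abs_max_sub_max_le_max _ _ _ _) (max_le ?_ ?_)
        · simpa using dist_nonneg
        · have h3 := abs_dist_sub_le x y x₀
          have h4 : dist x x₀ - (2:ℝ)^(p.1-2) - (dist y x₀ - (2:ℝ)^(p.1-2))
              = dist x x₀ - dist y x₀ := by ring
          rw [h4]
          exact h3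
    · simpa using dist_nonneg
  have hg_fin : ∀ x : X, ∀ ε > (0:ℝ), {p : ℤ × Set X | ε ≤ |gf x p|}.Finite := by
    intro x ε hε
    obtain ⟨m, hm⟩ := pow_unbounded_of_one_lt (dist x x₀) (one_lt_two (α := ℝ))
    obtain ⟨l, hl⟩ := pow_unbounded_of_one_lt (1/ε) (one_lt_two (α := ℝ))
    have hfin : (⋃ n ∈ Set.Icc (-(l:ℤ)) ((m:ℤ)+2),
        (fun V => ((n, V) : ℤ × Set X)) '' {V | V ∈ U n ∧ x ∈ V}).Finite :=
      (Set.finite_Icc _ _).biUnion (fun n _ => (hPF n x).image _)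
    refine hfin.subset ?_
    rintro ⟨n, V⟩ hp
    have hval : ε ≤ gf x (n, V) := by
      rwa [mem_setOf_eq, abs_of_nonneg (hg_nonneg _ _)] at hp
    have hUV : V ∈ U n := by
      by_contra hcon
      rw [hgf] at hval
      dsimp only at hval
      rw [if_neg hcon] at hval
      linarith
    rw [hgf] at hval
    dsimp only at hval
    rw [if_pos hUV] at hval
    have h1 : ε ≤ (2:ℝ)^(n-1) :=
      le_trans hval (le_trans (min_le_left _ _) (min_le_left _ _))
    have h2 : ε ≤ Metric.infDist x Vᶜ :=
      le_trans hval (le_trans (min_le_left _ _) (min_le_right _ _))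
    have h3 : ε ≤ max 0 (dist x x₀ - (2:ℝ)^(n-2)) := le_trans hval (min_le_right _ _)
    have hxV : x ∈ V := by
      by_contra hxV
      rw [Metric.infDist_zero_of_mem (Set.mem_compl hxV)] at h2
      linarith
    have hc : (2:ℝ)^(n-2) < dist x x₀ := by
      rcases max_cases (0:ℝ) (dist x x₀ - (2:ℝ)^(n-2)) with ⟨heq, _⟩ | ⟨heq, hlt⟩
      · rw [heq] at h3; linarith
      · rw [heq] at h3; linarith
    have hn1 : n ≤ (m:ℤ) + 2 := by
      have h5 : (2:ℝ)^(n-2) < (2:ℝ)^(m:ℤ) := by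
        refine lt_trans hc ?_
        rw [zpow_natCast]
        exact hm
      have := (zpow_lt_zpow_iff_right₀ (one_lt_two (α := ℝ))).1 h5
      omega
    have hn2 : -(l:ℤ) ≤ n := by
      have h2l : (2:ℝ)^(-(l:ℤ)) < ε := by
        rw [zpow_neg, zpow_natCast, inv_lt_comm₀ (by positivity) hε]
        rw [one_div] at hl
        exact hl
      have h5 : (2:ℝ)^(-(l:ℤ)) < (2:ℝ)^(n-1) := lt_of_lt_of_le h2l h1
      have := (zpow_lt_zpow_iff_right₀ (one_lt_two (α := ℝ))).1 h5
      omega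
    exact mem_biUnion ⟨hn2, hn1⟩ ⟨V, ⟨hUV, hxV⟩, rfl⟩
  set f : X → c0Space (ℤ × Set X) := fun x => mkc0 (gf x) (hg_fin x) with hf
  have hupper : ∀ x y : X, dist (f x) (f y) ≤ dist x y := by
    intro x y
    refine c0_dist_le _ _ _ dist_nonneg ?_
    intro p
    rw [hf]
    dsimp only
    rw [mkc0_apply, mkc0_apply, Real.dist_eq]
    exact hg_lip x y p
  have hlower : ∀ x y : X, dist y x₀ ≤ dist x x₀ →
      dist x y / (8*C') - D' ≤ dist (f x) (f y) := by
    intro x y hxy0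
    set t : ℝ := dist x y with ht
    by_cases htriv : t / (8*C') - D' ≤ 0
    · exact le_trans htriv dist_nonneg
    push_neg at htriv
    have h8C : (0:ℝ) < 8*C' := by linarith
    have hCpos : (0:ℝ) < C' := by linarith
    have htD : D' < t / (8*C') := by linarith
    have htpos : 0 < t := by
      rcases le_or_gt t 0 with h | h
      · exfalso
        have h9 : t / (8*C') ≤ 0 := div_nonpos_iff.2 (Or.inr ⟨h, h8C.le⟩)
        linarith
      · exact h
    have htD' : D' < t := lt_of_lt_of_le htD (div_le_self htpos.le (by linarith))
    set s : ℝ := (t - D') / C' with hs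
    have hspos : 0 < s := div_pos (by linarith) hCpos
    have hbdd : ∃ b : ℤ, ∀ z : ℤ, (2:ℝ)^z < s → z ≤ b := by
      obtain ⟨m, hm⟩ := pow_unbounded_of_one_lt s (one_lt_two (α := ℝ))
      refine ⟨m, fun z hz => ?_⟩
      have h5 : (2:ℝ)^z < (2:ℝ)^(m:ℤ) := by
        refine hz.trans ?_
        rw [zpow_natCast]
        exact hm
      exact le_of_lt ((zpow_lt_zpow_iff_right₀ (one_lt_two (α := ℝ))).1 h5)
    have hinh : ∃ z : ℤ, (2:ℝ)^z < s := by
      obtain ⟨l, hl⟩ := pow_unbounded_of_one_lt (1/s) (one_lt_two (α := ℝ))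
      refine ⟨-(l:ℤ), ?_⟩
      rw [zpow_neg, zpow_natCast, inv_lt_comm₀ (by positivity) hspos]
      rw [one_div] at hl
      exact hl
    obtain ⟨n, hn1, hn2⟩ := Int.exists_greatest_of_bdd hbdd hinh
    have hup2 : s ≤ (2:ℝ)^(n+1) := le_of_not_gt fun h => by
      have := hn2 (n+1) h
      omega
    have hCn : C' * (2:ℝ)^n + D' < t := by
      have h5 : C' * (2:ℝ)^n < C' * s := (mul_lt_mul_iff_right₀ hCpos).2 hn1
      rw [hs, mul_div_cancel₀ _ (ne_of_gt hCpos)] at h5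
      linarith
    have h2n_ge : (t - D') / (2*C') ≤ (2:ℝ)^n := by
      have h5 : (2:ℝ)^(n+1) = 2 * (2:ℝ)^n := by
        rw [zpow_add_one₀ (two_ne_zero (α := ℝ))]
        ring
      rw [h5] at hup2
      rw [hs] at hup2
      rw [div_le_iff₀ (by positivity)]
      calc t - D' = (t - D') / C' * C' := by field_simp
        _ ≤ 2 * (2:ℝ)^n * C' := by
            exact mul_le_mul_of_nonneg_right hup2 hCpos.le
        _ = (2:ℝ)^n * (2*C') := by ring
    have h2n1 : (2:ℝ)^n = 4 * (2:ℝ)^(n-2) := by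
      rw [show n = (n-2) + 2 by ring, zpow_add₀ (two_ne_zero (α := ℝ))]
      norm_num
      ring
    have h2n2 : (2:ℝ)^(n-1) = 2 * (2:ℝ)^(n-2) := by
      rw [show n - 1 = (n-2) + 1 by ring, zpow_add_one₀ (two_ne_zero (α := ℝ))]
      ring
    have hball : EMetric.diam (Metric.ball x ((2:ℝ)^(n-2))) ≤ ENNReal.ofReal ((2:ℝ)^(n-1)) := by
      apply EMetric.diam_le
      intro a ha b hb
      rw [edist_dist]
      apply ENNReal.ofReal_le_ofReal
      have ha' := Metric.mem_ball.1 ha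
      have hb' := Metric.mem_ball.1 hb
      have h5 : dist a b ≤ dist a x + dist x b := dist_triangle a x b
      rw [dist_comm x b] at h5
      rw [h2n2]
      linarith
    obtain ⟨V, hV, hbV⟩ := hLeb n _ hball
    have hxV : x ∈ V := hbV (Metric.mem_ball_self (by positivity))
    have hyV : y ∉ V := by
      intro hyV
      have := hDiam n V hV x y hxV hyV
      rw [← ht] at this
      linarith
    have hyc : gf y (n, V) = 0 := by
      rw [hgf]
      dsimp only
      rw [if_pos hV, Metric.infDist_zero_of_mem (Set.mem_compl hyV)]
      have e1 : min ((2:ℝ)^(n-1)) 0 = 0 := min_eq_right (by positivity)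
      rw [e1, min_eq_left (le_max_left 0 _)]
    have hxx0 : t/2 ≤ dist x x₀ := by
      have h5 : t ≤ dist x x₀ + dist x₀ y := dist_triangle x x₀ y
      rw [dist_comm x₀ y] at h5
      linarith
    have h2nt : (2:ℝ)^n < t := by
      nlinarith
    have hxc : (2:ℝ)^(n-2) ≤ gf x (n, V) := by
      rw [hgf]
      dsimp only
      rw [if_pos hV]
      refine le_min (le_min ?_ ?_) ?_
      · rw [h2n2]; nlinarith [zpow_pos (show (0:ℝ) < 2 by norm_num) (n-2)]
      · refine le_infDist' ⟨y, hyV⟩ ?_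
        intro z hz
        have h5 : z ∉ Metric.ball x ((2:ℝ)^(n-2)) := fun h => hz (hbV h)
        have h6 : ¬ dist z x < (2:ℝ)^(n-2) := fun h => h5 (Metric.mem_ball.2 h)
        rw [dist_comm z x] at h6
        linarith [not_lt.1 h6]
      · refine le_trans ?_ (le_max_right 0 _)
        rw [h2n1] at h2nt
        linarith
    have hcoordbound : gf x (n,V) - gf y (n,V) ≤ dist (f x) (f y) := by
      have h5 := c0_dist_coord (f x) (f y) (n, V)
      rw [hf] at h5
      dsimp only at h5
      rw [mkc0_apply, mkc0_apply, Real.dist_eq] at h5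
      exact le_trans (le_abs_self _) h5
    have hfinal : t / (8*C') - D' ≤ (2:ℝ)^(n-2) := by
      have h5 : (t - D') / (8*C') ≤ (2:ℝ)^(n-2) := by
        rw [h2n1] at h2n_ge
        rw [div_le_iff₀ h8C]
        rw [div_le_iff₀ (show (0:ℝ) < 2*C' by linarith)] at h2n_ge
        nlinarith
      have h6 : t / (8*C') - D' ≤ (t - D') / (8*C') := by
        have h7 : (t - D') / (8*C') = t / (8*C') - D' / (8*C') := sub_div _ _ _
        have h8 : D' / (8*C') ≤ D' := div_le_self hD (by linarith)
        linarith
      linarith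
    rw [hyc] at hcoordbound
    linarith
  refine ⟨f, fun x y => ⟨?_, hupper x y⟩⟩
  rcases le_total (dist y x₀) (dist x x₀) with h | h
  · exact hlower x y h
  · rw [dist_comm x y, dist_comm (f x) (f y)]
    exact hlower y x h

theorem lemB (ι : Type u) (r : ℝ) (hr : 0 < r) :
    ∃ V : Set (Set (c0Space ι)), IsCover V ∧ PointFinite V ∧
      (∀ E : Set (c0Space ι), EMetric.diam E ≤ ENNReal.ofReal r → ∃ W ∈ V, E ⊆ W) ∧
      (∀ W ∈ V, ∀ g h : c0Space ι, g ∈ W → h ∈ W → dist g h ≤ 8*r) := by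
  classical
  set vs : Finset ι → (ι → ℤ) → Set (c0Space ι) := fun F k =>
    {g : c0Space ι | (∀ i ∈ F, ((k i : ℝ) * r ≤ g i ∧ g i ≤ ((k i : ℝ) + 3) * r) ∧
        (1 ≤ k i ∨ k i ≤ -4)) ∧ ∀ i ∉ F, |g i| ≤ 4 * r} with hvs
  set 𝒱 : Set (Set (c0Space ι)) :=
    {W | ∃ F : Finset ι, ∃ k : ι → ℤ, (∀ i ∉ F, k i = 0) ∧ W = vs F k} with h𝒱
  have hleb : ∀ E : Set (c0Space ι), EMetric.diam E ≤ ENNReal.ofReal r → ∃ W ∈ 𝒱, E ⊆ W := by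
    intro E hE
    rcases E.eq_empty_or_nonempty with rfl | ⟨f₀, hf₀⟩
    · exact ⟨vs ∅ 0, ⟨∅, 0, fun i _ => rfl, rfl⟩, empty_subset _⟩
    · set F : Finset ι := (c0_finite f₀ (3*r) (by positivity)).toFinset with hF
      set k : ι → ℤ := fun i => if i ∈ F then ⌊f₀ i / r⌋ - 1 else 0 with hk
      refine ⟨vs F k, ⟨F, k, fun i hi => by simp [hk, hi], rfl⟩, ?_⟩
      intro g hg
      have hdist : dist g f₀ ≤ r := by
        have h1 : edist g f₀ ≤ ENNReal.ofReal r :=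
          le_trans (EMetric.edist_le_diam_of_mem hg hf₀) hE
        rw [edist_dist] at h1
        exact (ENNReal.ofReal_le_ofReal_iff hr.le).1 h1
      have hcoord : ∀ i, |g i - f₀ i| ≤ r := by
        intro i
        have h2 := c0_dist_coord g f₀ i
        rw [Real.dist_eq] at h2
        exact h2.trans hdist
      constructor
      · intro i hi
        have h3r : 3*r ≤ |f₀ i| := by
          rw [hF, Set.Finite.mem_toFinset] at hi; exact hi
        have hki : k i = ⌊f₀ i / r⌋ - 1 := by rw [hk]; simp [hi]
        have hgi := abs_le.1 (hcoord i)
        have hfl : (⌊f₀ i / r⌋ : ℝ) ≤ f₀ i / r := Int.floor_le _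
        have hfl2 : f₀ i / r < ⌊f₀ i / r⌋ + 1 := Int.lt_floor_add_one _
        have hflr : (⌊f₀ i / r⌋ : ℝ) * r ≤ f₀ i := by
          have h4 := mul_le_mul_of_nonneg_right hfl hr.le
          rwa [div_mul_cancel₀ _ (ne_of_gt hr)] at h4
        have hflr2 : f₀ i < ((⌊f₀ i / r⌋ : ℝ) + 1) * r := by
          have h4 := mul_lt_mul_of_pos_right hfl2 hr
          rwa [div_mul_cancel₀ _ (ne_of_gt hr)] at h4
        refine ⟨⟨?_, ?_⟩, ?_⟩
        · rw [hki]; push_cast; nlinarith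
        · rw [hki]; push_cast; nlinarith
        · rcases abs_cases (f₀ i) with ⟨heq, _⟩ | ⟨heq, _⟩
          · left
            rw [hki]
            have : (3:ℤ) ≤ ⌊f₀ i / r⌋ := by
              rw [Int.le_floor]
              push_cast
              rw [le_div_iff₀ hr]
              nlinarith [heq ▸ h3r]
            omega
          · right
            rw [hki]
            have : ⌊f₀ i / r⌋ ≤ -3 := by
              have h5 : f₀ i / r ≤ -3 := by
                rw [div_le_iff₀ hr]
                nlinarith [heq ▸ h3r]
              calc ⌊f₀ i / r⌋ ≤ ⌊(-3 : ℝ)⌋ := Int.floor_le_floor h5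
                _ = -3 := by norm_num
            omega
      · intro i hi
        have h3r : |f₀ i| < 3*r := by
          rw [hF, Set.Finite.mem_toFinset] at hi
          simpa using not_le.1 hi
        have h4 := hcoord i
        calc |g i| = |f₀ i + (g i - f₀ i)| := by ring_nf
          _ ≤ |f₀ i| + |g i - f₀ i| := abs_add_le _ _
          _ ≤ 4 * r := by linarith
  refine ⟨𝒱, ?_, ?_, hleb, ?_⟩
  · ext g
    simp only [mem_sUnion, mem_univ, iff_true]
    obtain ⟨W, hW, hsub⟩ := hleb {g} (by rw [show EMetric.diam ({g} : Set (c0Space ι)) = 0 from Metric.ediam_singleton]; simp)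
    exact ⟨W, hW, hsub rfl⟩
  · -- PointFinite
    intro g
    set G : Finset ι := (c0_finite g r hr).toFinset with hG
    set mlo : ι → ℤ := fun i => min (⌈g i / r⌉ - 3) 0 with hmlo
    set mhi : ι → ℤ := fun i => max ⌊g i / r⌋ 0 with hmhi
    have hFset : {F : Finset ι | ↑F ⊆ (G : Set ι)}.Finite := by
      refine Set.Finite.of_finite_image ?_ (fun F _ F' _ h => Finset.coe_injective h)
      refine (G.finite_toSet.finite_subsets).subset ?_
      rintro s ⟨F, hF, rfl⟩
      exact hF
    have hKset : {k : ι → ℤ | (∀ i, k i ∈ Set.Icc (mlo i) (mhi i)) ∧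
        ∀ i ∉ G, k i = 0}.Finite := by
      rw [← Set.finite_coe_iff]
      haveI : ∀ i : ι, Finite (Set.Icc (mlo i) (mhi i)) :=
        fun i => (Set.finite_Icc _ _).to_subtype
      refine Finite.of_injective
        (fun k (i : G) => (⟨k.1 i, k.2.1 i⟩ : Set.Icc (mlo i) (mhi i))) ?_
      intro k k' h
      apply Subtype.ext; funext i
      by_cases hi : i ∈ G
      · simpa using congrFun h ⟨i, hi⟩
      · rw [k.2.2 i hi, k'.2.2 i hi]
    have key : {W | W ∈ 𝒱 ∧ g ∈ W} ⊆ (fun p : Finset ι × (ι → ℤ) => vs p.1 p.2) ''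
        ({F : Finset ι | ↑F ⊆ (G : Set ι)} ×ˢ {k : ι → ℤ |
          (∀ i, k i ∈ Set.Icc (mlo i) (mhi i)) ∧ ∀ i ∉ G, k i = 0}) := by
      rintro W ⟨⟨F, k, hk0, rfl⟩, hgW⟩
      obtain ⟨hgW1, hgW2⟩ := hgW
      have hFG : ↑F ⊆ (G : Set ι) := by
        intro i hi
        obtain ⟨⟨h1, h2⟩, hall⟩ := hgW1 i hi
        have hri : r ≤ |g i| := by
          rcases hall with h | h
          · have hk1 : (1:ℝ) ≤ (k i : ℝ) := by exact_mod_cast h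
            have : r ≤ g i := by nlinarith
            exact this.trans (le_abs_self _)
          · have hk1 : (k i : ℝ) ≤ -4 := by exact_mod_cast h
            have : g i ≤ -r := by nlinarith
            have h5 : r ≤ -(g i) := by linarith
            exact h5.trans (neg_le_abs _)
        rw [hG]
        simp only [Finset.coe_sort_coe, Set.Finite.coe_toFinset, Set.Finite.mem_toFinset,
          mem_setOf_eq]
        exact hri
      refine ⟨(F, k), ⟨hFG, ?_, ?_⟩, rfl⟩
      · intro i
        show k i ∈ Set.Icc (mlo i) (mhi i)
        rw [Set.mem_Icc]
        by_cases hi : i ∈ F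
        · obtain ⟨⟨h1, h2⟩, _⟩ := hgW1 i hi
          constructor
          · refine le_trans (min_le_left _ _) ?_
            have h5 : g i / r ≤ (k i : ℝ) + 3 := by
              rw [div_le_iff₀ hr]; nlinarith
            have h6 : ⌈g i / r⌉ ≤ k i + 3 := by
              rw [Int.ceil_le]; push_cast; exact h5
            omega
          · refine le_trans ?_ (le_max_left _ _)
            have h5 : (k i : ℝ) ≤ g i / r := by
              rw [le_div_iff₀ hr]; nlinarith
            exact Int.le_floor.2 h5
        · rw [hk0 i hi]
          exact ⟨min_le_right _ _, le_max_right _ _⟩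
      · intro i hi
        show k i = 0
        exact hk0 i (fun hiF => hi (hFG hiF))
    exact ((hFset.prod hKset).image _).subset key
  · rintro W ⟨F, k, hk0, rfl⟩ g h hgW hhW
    refine c0_dist_le _ _ _ (by positivity) ?_
    intro i
    rw [Real.dist_eq]
    by_cases hi : i ∈ F
    · obtain ⟨⟨h1, h2⟩, _⟩ := hgW.1 i hi
      obtain ⟨⟨h3, h4⟩, _⟩ := hhW.1 i hi
      have : |g i - h i| ≤ 3 * r := abs_le.2 ⟨by linarith, by linarith⟩
      linarith
    · have h5 := hgW.2 i hi
      have h6 := hhW.2 i hi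
      calc |g i - h i| ≤ |g i| + |h i| := abs_sub _ _
        _ ≤ 8 * r := by linarith

theorem pullback {X : Type u} [MetricSpace X] {ι : Type u} (f : X → c0Space ι)
    (A B r : ℝ) (hA : 0 < A) (hB : 0 ≤ B) (hr : 0 < r) (R : ℝ≥0)
    (hlow : ∀ x y : X, (1/A) * dist x y - B ≤ dist (f x) (f y))
    (hup : ∀ x y : X, dist x y < (R:ℝ) → dist (f x) (f y) ≤ r) :
    Δc X R ≤ ENNReal.ofReal (A * (8*r + B)) := by
  obtain ⟨V, hVcov, hVpf, hVleb, hVdiam⟩ := lemB ι r hr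
  have hmem : ((fun W => f ⁻¹' W) '' V) ∈
      {U : Set (Set X) | IsCover U ∧ PointFinite U ∧ (R:ℝ≥0∞) ≤ Leb U} := by
    refine ⟨?_, ?_, ?_⟩
    · ext x
      simp only [mem_sUnion, mem_univ, iff_true]
      have h1 : f x ∈ ⋃₀ V := by rw [hVcov]; trivial
      obtain ⟨W, hW, hfx⟩ := h1
      exact ⟨f ⁻¹' W, ⟨W, hW, rfl⟩, hfx⟩
    · intro x
      have h2 : {U' | U' ∈ (fun W => f ⁻¹' W) '' V ∧ x ∈ U'} ⊆
          (fun W => f ⁻¹' W) '' {W | W ∈ V ∧ f x ∈ W} := by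
        rintro U' ⟨⟨W, hW, rfl⟩, hx⟩
        exact ⟨W, ⟨hW, hx⟩, rfl⟩
      exact ((hVpf (f x)).image _).subset h2
    · refine le_sSup ?_
      intro E hE
      have hsub : EMetric.diam (f '' E) ≤ ENNReal.ofReal r := by
        apply EMetric.diam_le
        rintro a ⟨xa, hxa, rfl⟩ b ⟨xb, hxb, rfl⟩
        rw [edist_dist]
        apply ENNReal.ofReal_le_ofReal
        apply hup
        have h3 : edist xa xb < (R : ℝ≥0∞) :=
          lt_of_le_of_lt (EMetric.edist_le_diam_of_mem hxa hxb) hE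
        rwa [edist_lt_coe, ← NNReal.coe_lt_coe, coe_nndist] at h3
      obtain ⟨W, hW, hsubW⟩ := hVleb (f '' E) hsub
      exact ⟨f ⁻¹' W, ⟨W, hW, rfl⟩, fun x hx => hsubW ⟨x, hx, rfl⟩⟩
  refine le_trans (iInf₂_le _ hmem) ?_
  refine iSup₂_le ?_
  rintro U' ⟨W, hW, rfl⟩
  apply EMetric.diam_le
  intro a ha b hb
  rw [edist_dist]
  apply ENNReal.ofReal_le_ofReal
  have h1 := hlow a b
  have h2 := hVdiam W hW (f a) (f b) ha hb
  have key : (1/A) * dist a b - B ≤ 8*r := le_trans h1 h2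
  have h5 : dist a b / A ≤ 8*r + B := by
    rw [one_div, inv_mul_eq_div] at key
    linarith
  rw [div_le_iff₀ hA] at h5
  calc dist a b ≤ (8*r + B) * A := h5
    _ = A * (8*r + B) := mul_comm _ _


/-- Extraction of good covers from the `Δc` bound, and the embedding. -/
theorem backward {X : Type u} [MetricSpace X] (C D : ℝ≥0)
    (h : ∀ R : ℝ≥0, Δc X ((R : ℝ≥0∞)) ≤ ((C * R + D : ℝ≥0) : ℝ≥0∞)) :
    ∃ f : X → c0Space (ℤ × Set X), ∀ x y : X,
      dist x y / (8*((C:ℝ)+1)) - (D:ℝ) ≤ dist (f x) (f y) ∧ dist (f x) (f y) ≤ dist x y := by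
  by_cases hne : Nonempty X
  case neg =>
    exact ⟨fun x => (hne ⟨x⟩).elim, fun x y => (hne ⟨x⟩).elim⟩
  obtain ⟨x₀⟩ := hne
  have hcov : ∀ n : ℤ, ∃ U : Set (Set X), PointFinite U ∧
      (∀ E : Set X, EMetric.diam E ≤ ENNReal.ofReal ((2:ℝ)^(n-1)) → ∃ V ∈ U, E ⊆ V) ∧
      (∀ V ∈ U, ∀ x y : X, x ∈ V → y ∈ V → dist x y ≤ ((C:ℝ)+1) * (2:ℝ)^n + (D:ℝ)) := by
    intro n
    set R : ℝ≥0 := (2:ℝ≥0)^n with hRdef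
    have hRpos : 0 < R := by positivity
    have hcoeR : (R : ℝ) = (2:ℝ)^n := by
      rw [hRdef]
      push_cast
      rfl
    have hlt : Δc X (R : ℝ≥0∞) < (((C+1)*R + D : ℝ≥0) : ℝ≥0∞) := by
      refine lt_of_le_of_lt (h R) ?_
      rw [ENNReal.coe_lt_coe]
      calc C * R + D < C * R + R + D := by
            rw [add_lt_add_iff_right]
            exact lt_add_of_pos_right _ hRpos
        _ = (C+1)*R + D := by ring
    have hex : ∃ U ∈ {U : Set (Set X) | IsCover U ∧ PointFinite U ∧ (R:ℝ≥0∞) ≤ Leb U},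
        covDiam U < (((C+1)*R + D : ℝ≥0) : ℝ≥0∞) := by
      by_contra hcon
      push_neg at hcon
      exact absurd hlt (not_lt.2 (le_iInf₂ hcon))
    obtain ⟨U, ⟨hUc, hUpf, hUleb⟩, hUdiam⟩ := hex
    refine ⟨U, hUpf, ?_, ?_⟩
    · intro E hE
      have h2 : ENNReal.ofReal ((2:ℝ)^(n-1)) < (R : ℝ≥0∞) := by
        rw [← ENNReal.ofReal_coe_nnreal, hcoeR]
        rw [ENNReal.ofReal_lt_ofReal_iff (by positivity)]
        exact (zpow_lt_zpow_iff_right₀ (one_lt_two (α := ℝ))).2 (by omega)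
      have h3 : EMetric.diam E < Leb U := lt_of_le_of_lt hE (lt_of_lt_of_le h2 hUleb)
      rw [Leb] at h3
      obtain ⟨d, hd, hlt2⟩ := lt_sSup_iff.1 h3
      exact hd E hlt2
    · intro V hV a b ha hb
      have h5 : EMetric.diam V ≤ (((C+1)*R + D : ℝ≥0) : ℝ≥0∞) := by
        refine le_trans ?_ hUdiam.le
        exact le_iSup₂ (f := fun (V : Set X) (_ : V ∈ U) => EMetric.diam V) V hV
      have h6 : edist a b ≤ (((C+1)*R + D : ℝ≥0) : ℝ≥0∞) :=
        le_trans (EMetric.edist_le_diam_of_mem ha hb) h5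
      rw [edist_le_coe] at h6
      have h7 : dist a b ≤ (((C+1)*R + D : ℝ≥0) : ℝ) := by
        rw [← coe_nndist]
        exact_mod_cast h6
      have h8 : (((C+1)*R + D : ℝ≥0) : ℝ) = ((C:ℝ)+1) * (2:ℝ)^n + (D:ℝ) := by
        push_cast [hcoeR]
        norm_num
      rw [h8] at h7
      exact h7
  have hC1 : (1:ℝ) ≤ (C:ℝ)+1 := by
    have := C.coe_nonneg
    linarith
  exact lemA x₀ ((C:ℝ)+1) (D:ℝ) hC1 D.coe_nonneg hcov

end Aux18

theorem stmt18 {X : Type u} [MetricSpace X] :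
    ((∃ (ι : Type u) (f : X → c0Space ι) (A : ℝ), 1 ≤ A ∧
        ∀ x y : X, (1 / A) * dist x y ≤ dist (f x) (f y) ∧
          dist (f x) (f y) ≤ A * dist x y) ↔
      ∃ C : ℝ≥0, ∀ R : ℝ≥0, Δc X R ≤ ((C * R : ℝ≥0) : ℝ≥0∞)) ∧
    ((∃ (ι : Type u) (f : X → c0Space ι) (A B : ℝ), 1 ≤ A ∧ 0 ≤ B ∧
        ∀ x y : X, (1 / A) * dist x y - B ≤ dist (f x) (f y) ∧
          dist (f x) (f y) ≤ A * dist x y + B) ↔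
      ∃ C D : ℝ≥0, ∀ R : ℝ≥0, Δc X R ≤ ((C * R + D : ℝ≥0) : ℝ≥0∞)) := by
  constructor
  · constructor
    · rintro ⟨ι, f, A, hA, hf⟩
      have hApos : (0:ℝ) < A := lt_of_lt_of_le one_pos hA
      refine ⟨Real.toNNReal (16*A^2), fun R => ?_⟩
      rcases eq_or_ne R 0 with rfl | hR
      · simpa using Aux18.dcZero X
      · have hRpos : 0 < (R:ℝ) := by
          have := (pos_iff_ne_zero (a := R)).2 hR
          exact_mod_cast this
        have hbound := Aux18.pullback f A 0 (2*A*(R:ℝ)) hApos le_rfl (by positivity) R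
          (fun x y => by
            have := (hf x y).1
            linarith)
          (fun x y hxy => by
            have h2 := (hf x y).2
            nlinarith [dist_nonneg (x := x) (y := y)])
        refine le_trans hbound ?_
        have he : A * (8*(2*A*(R:ℝ)) + 0) = 16*A^2 * (R:ℝ) := by ring
        rw [he]
        apply le_of_eq
        calc ENNReal.ofReal (16*A^2 * (R:ℝ))
            = ENNReal.ofReal (16*A^2) * ENNReal.ofReal ((R:ℝ)) :=
              ENNReal.ofReal_mul (by positivity)
          _ = ((Real.toNNReal (16*A^2) : ℝ≥0) : ℝ≥0∞) * ((R : ℝ≥0) : ℝ≥0∞) := by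
              rw [ENNReal.ofReal_coe_nnreal]
              rfl
          _ = ((Real.toNNReal (16*A^2) * R : ℝ≥0) : ℝ≥0∞) := (ENNReal.coe_mul _ _).symm
    · rintro ⟨C, hC⟩
      have h0 : ∀ R : ℝ≥0, Δc X ((R : ℝ≥0∞)) ≤ ((C * R + 0 : ℝ≥0) : ℝ≥0∞) := by
        intro R
        simpa using hC R
      obtain ⟨f, hfprop⟩ := Aux18.backward C 0 h0
      have hC1 : (1:ℝ) ≤ 8*((C:ℝ)+1) := by
        have := C.coe_nonneg
        linarith
      refine ⟨ℤ × Set X, f, 8*((C:ℝ)+1), hC1, fun x y => ⟨?_, ?_⟩⟩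
      · have h2 := (hfprop x y).1
        rw [one_div, inv_mul_eq_div]
        push_cast at h2
        linarith
      · have h2 := (hfprop x y).2
        have hd := dist_nonneg (x := x) (y := y)
        nlinarith [C.coe_nonneg]
  · constructor
    · rintro ⟨ι, f, A, B, hA, hB, hf⟩
      have hApos : (0:ℝ) < A := lt_of_lt_of_le one_pos hA
      refine ⟨Real.toNNReal (16*A^2), Real.toNNReal (A*(17*B+8)), fun R => ?_⟩
      have hr : (0:ℝ) < 2*(A*(R:ℝ)+B)+1 := by positivity
      have hbound := Aux18.pullback f A B (2*(A*(R:ℝ)+B)+1) hApos hB hr R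
        (fun x y => (hf x y).1)
        (fun x y hxy => by
          have h2 := (hf x y).2
          nlinarith [dist_nonneg (x := x) (y := y)])
      refine le_trans hbound ?_
      have he : A * (8*(2*(A*(R:ℝ)+B)+1) + B) = 16*A^2 * (R:ℝ) + A*(17*B+8) := by ring
      rw [he]
      apply le_of_eq
      calc ENNReal.ofReal (16*A^2 * (R:ℝ) + A*(17*B+8))
          = ENNReal.ofReal (16*A^2 * (R:ℝ)) + ENNReal.ofReal (A*(17*B+8)) := by
            rw [ENNReal.ofReal_add (by positivity) (by positivity)]
        _ = ENNReal.ofReal (16*A^2) * ENNReal.ofReal ((R:ℝ)) + ENNReal.ofReal (A*(17*B+8)) := by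
            rw [ENNReal.ofReal_mul (by positivity)]
        _ = ((Real.toNNReal (16*A^2) * R + Real.toNNReal (A*(17*B+8)) : ℝ≥0) : ℝ≥0∞) := by
            rw [ENNReal.ofReal_coe_nnreal]
            push_cast
            rfl
    · rintro ⟨C, D, hCD⟩
      obtain ⟨f, hfprop⟩ := Aux18.backward C D hCD
      have hC1 : (1:ℝ) ≤ 8*((C:ℝ)+1) := by
        have := C.coe_nonneg
        linarith
      refine ⟨ℤ × Set X, f, 8*((C:ℝ)+1), (D:ℝ), hC1, D.coe_nonneg, fun x y => ⟨?_, ?_⟩⟩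
      · have h2 := (hfprop x y).1
        rw [one_div, inv_mul_eq_div]
        linarith
      · have h2 := (hfprop x y).2
        have hd := dist_nonneg (x := x) (y := y)
        nlinarith [C.coe_nonneg, D.coe_nonneg]
end
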